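/- arXiv:0807.1078 — 7 statements merged into one kernel-verified Lean document; each statement's English description precedes it below -/
import Mathlib

section
/- For every integer b ≥ 1 and every power series h ∈ 1 + π·E[[π]] there exists a unique g ∈ 1 + π·E[[π]] such that φ^b(g) = h·g. Moreover, for any real number c > 0, g lies in R_{c,E} if and only if h lies in R_{c,E}; in particular, g has coefficients in O_E if and only if h has coefficients in O_E. -/
/-!
STATEMENT 5: For every integer b ≥ 1 and every power series h ∈ 1 + π·E[[π]] there
exists a unique g ∈ 1 + π·E[[π]] such that φ^b(g) = h·g.  Moreover, for any real
c > 0, g lies in R_{c,E} iff h lies in R_{c,E}; in particular, g has coefficients in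
O_E iff h has coefficients in O_E.

Context: E is a finite extension of Q_p, with p-adic valuation ord (normalized by
ord(p) = 1, given here as data satisfying the valuation axioms and extending the
valuation of Q_p) and ring of integers O_E = {x : 0 ≤ ord x}; φ is the E-linear ring
endomorphism of E[[π]] determined by φ(π) = (1+π)^p − 1 (the determination is
expressed by the coefficientwise continuity property hφcont); R_{c,E} is the set of
power series Σ a_s π^s with ord(a_s) ≥ −s/c.
-/

open PowerSeries

section StmtFiveAux

/-- Auxiliary recursively defined coefficient sequence. -/
noncomputable def stmt5gc {E : Type*} [Field E] (A : ℕ → ℕ → E) (hc : ℕ → E) (d : ℕ → E) : ℕ → E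
  | 0 => 1
  | (n+1) => d (n+1) *
      ∑ k ∈ (Finset.range (n+1)).attach, (hc (n+1-k.1) - A (n+1) k.1) * stmt5gc A hc d k.1
  decreasing_by exact Finset.mem_range.mp k.2

theorem stmt5gc_succ {E : Type*} [Field E] (A : ℕ → ℕ → E) (hc : ℕ → E) (d : ℕ → E) (n : ℕ) :
    stmt5gc A hc d (n+1) = d (n+1) *
      ∑ k ∈ Finset.range (n+1), (hc (n+1-k) - A (n+1) k) * stmt5gc A hc d k := by
  rw [stmt5gc]
  congr 1
  exact Finset.sum_attach (Finset.range (n+1)) (fun k => (hc (n+1-k) - A (n+1) k) * stmt5gc A hc d k)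

variable {E : Type*} [Field E]

theorem stmt5_cQ (P n : ℕ) :
    coeff n ((1 + X : PowerSeries E) ^ P) = (P.choose n : E) := by
  have h1 : ((1 + X : PowerSeries E)) = ((1 + Polynomial.X : Polynomial E) : PowerSeries E) := by
    push_cast; ring
  rw [h1, ← Polynomial.coe_pow, Polynomial.coeff_coe, Polynomial.coeff_one_add_X_pow]

theorem stmt5_Qlow (P n k : ℕ) (hnk : n < k) :
    coeff n (((1 + X : PowerSeries E) ^ P - 1) ^ k) = 0 := by
  have hX : (X : PowerSeries E) ∣ ((1 + X) ^ P - 1) := by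
    rw [PowerSeries.X_dvd_iff]; simp
  exact (PowerSeries.X_pow_dvd_iff.mp (pow_dvd_pow_of_dvd hX k)) n hnk

theorem stmt5_Qdiag (P n : ℕ) :
    coeff n (((1 + X : PowerSeries E) ^ P - 1) ^ n) = ((P : ℕ) : E) ^ n := by
  set u : PowerSeries E := PowerSeries.mk fun j => (P.choose (j+1) : E) with hu
  have hQ : ((1 + X : PowerSeries E) ^ P - 1) = X * u := by
    ext m
    cases m with
    | zero => simp [stmt5_cQ]
    | succ m =>
      rw [coeff_succ_X_mul, map_sub, stmt5_cQ]
      simp [hu, PowerSeries.coeff_one]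
  rw [hQ, mul_pow]
  have h2 := coeff_X_pow_mul (u ^ n) n 0
  rw [zero_add] at h2
  rw [h2, coeff_zero_eq_constantCoeff, map_pow]
  simp [hu]

theorem stmt5_Qint (P n k : ℕ) :
    ∃ m : ℤ, coeff n (((1 + X : PowerSeries E) ^ P - 1) ^ k) = (m : E) := by
  refine ⟨PowerSeries.coeff n ((((1 + X) ^ P - 1) ^ k : PowerSeries ℤ)), ?_⟩
  have h1 : (((1 + X : PowerSeries E) ^ P - 1) ^ k)
      = PowerSeries.map (Int.castRingHom E) ((((1 + X) ^ P - 1) ^ k : PowerSeries ℤ)) := by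
    simp [map_pow, map_sub, map_add, map_one, PowerSeries.map_X]
  rw [h1, PowerSeries.coeff_map]
  rfl

theorem stmt5_key1 (p : ℕ) (φ : PowerSeries E →+* PowerSeries E)
    (hφC : ∀ c : E, φ (C c) = C c)
    (hφX : φ X = (1 + X) ^ p - 1)
    (hφcont : ∀ (f : PowerSeries E) (n : ℕ),
      coeff n (φ f) = coeff n (φ ((trunc (n + 1) f : Polynomial E) : PowerSeries E)))
    (f : PowerSeries E) (n : ℕ) :
    coeff n (φ f) = ∑ k ∈ Finset.range (n+1),
      coeff k f * coeff n (((1 + X : PowerSeries E) ^ p - 1) ^ k) := by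
  rw [hφcont]
  have h1 : φ ((trunc (n + 1) f : Polynomial E) : PowerSeries E)
      = ∑ k ∈ Finset.range (n+1), C (coeff k f) * ((1 + X) ^ p - 1) ^ k := by
    rw [trunc_apply, ← Finset.range_eq_Ico]
    have h2 : ∀ P : Polynomial E, φ (P : PowerSeries E)
        = (φ.comp Polynomial.coeToPowerSeries.ringHom) P := fun _ => rfl
    rw [h2, map_sum]
    refine Finset.sum_congr rfl fun k _ => ?_
    rw [← Polynomial.C_mul_X_pow_eq_monomial]
    simp only [RingHom.comp_apply, Polynomial.coeToPowerSeries.ringHom_apply]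
    push_cast
    rw [map_mul, map_pow, hφX, hφC]
  rw [h1, map_sum]
  refine Finset.sum_congr rfl fun k _ => ?_
  rw [coeff_C_mul]

theorem stmt5_keyb (p : ℕ) (φ : PowerSeries E →+* PowerSeries E)
    (hφC : ∀ c : E, φ (C c) = C c)
    (hφX : φ X = (1 + X) ^ p - 1)
    (hφcont : ∀ (f : PowerSeries E) (n : ℕ),
      coeff n (φ f) = coeff n (φ ((trunc (n + 1) f : Polynomial E) : PowerSeries E)))
    (hkey1 : ∀ (f : PowerSeries E) (n : ℕ), coeff n (φ f) = ∑ k ∈ Finset.range (n+1),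
      coeff k f * coeff n (((1 + X : PowerSeries E) ^ p - 1) ^ k))
    (m : ℕ) (f : PowerSeries E) (n : ℕ) :
    coeff n ((⇑φ)^[m] f) = ∑ k ∈ Finset.range (n+1),
      coeff k f * coeff n (((1 + X : PowerSeries E) ^ (p^m) - 1) ^ k) := by
  induction m generalizing f n with
  | zero =>
    have hX : ((1 + X : PowerSeries E) ^ (p^0) - 1) = X := by
      rw [pow_zero, pow_one]; ring
    rw [Function.iterate_zero, id_eq, hX]
    rw [Finset.sum_eq_single n]
    · rw [coeff_X_pow, if_pos rfl, mul_one]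
    · intro k _ hk
      rw [coeff_X_pow, if_neg (Ne.symm hk), mul_zero]
    · intro hn; exact absurd (Finset.self_mem_range_succ n) hn
  | succ m ih =>
    have hφQ : φ ((1 + X : PowerSeries E) ^ (p^m) - 1) = (1 + X) ^ (p^(m+1)) - 1 := by
      rw [map_sub, map_pow, map_add, map_one, hφX]
      have : ((1 : PowerSeries E) + ((1 + X) ^ p - 1)) = (1 + X) ^ p := by ring
      rw [this, ← pow_mul, ← pow_succ']
    rw [Function.iterate_succ_apply', hkey1]
    calc
      ∑ k ∈ Finset.range (n+1), coeff k ((⇑φ)^[m] f) * coeff n (((1 + X) ^ p - 1) ^ k)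
        = ∑ k ∈ Finset.range (n+1), (∑ j ∈ Finset.range (n+1),
            coeff j f * coeff k (((1 + X) ^ (p^m) - 1) ^ j))
              * coeff n (((1 + X) ^ p - 1) ^ k) := by
          refine Finset.sum_congr rfl fun k hk => ?_
          rw [ih]
          congr 1
          refine Finset.sum_subset ?_ ?_
          · intro j hj
            exact Finset.mem_range.mpr (lt_of_lt_of_le (Finset.mem_range.mp hj)
              (Nat.succ_le_succ (Nat.lt_succ_iff.mp (Finset.mem_range.mp hk))))
          · intro j _ hj
            rw [stmt5_Qlow (p^m) k j (by
              rcases Nat.lt_or_ge k j with hlt | hge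
              · exact hlt
              · exact absurd (Finset.mem_range.mpr (Nat.lt_succ_of_le hge)) hj), mul_zero]
      _ = ∑ j ∈ Finset.range (n+1), coeff j f * (∑ k ∈ Finset.range (n+1),
            coeff k (((1 + X) ^ (p^m) - 1) ^ j) * coeff n (((1 + X) ^ p - 1) ^ k)) := by
          simp_rw [Finset.sum_mul, Finset.mul_sum]
          rw [Finset.sum_comm]
          exact Finset.sum_congr rfl fun j _ => Finset.sum_congr rfl fun k _ => by ring
      _ = ∑ j ∈ Finset.range (n+1), coeff j f
            * coeff n (((1 + X : PowerSeries E) ^ (p^(m+1)) - 1) ^ j) := by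
          refine Finset.sum_congr rfl fun j _ => ?_
          rw [← hkey1, map_pow, hφQ]

theorem stmt5_ordsum (ord : E → WithTop ℝ)
    (hordadd : ∀ x y : E, min (ord x) (ord y) ≤ ord (x + y))
    (hordzero : ord 0 = ⊤)
    (s : Finset ℕ) (f : ℕ → E) (t : WithTop ℝ) (hts : ∀ i ∈ s, t ≤ ord (f i)) :
    t ≤ ord (∑ i ∈ s, f i) := by
  classical
  induction s using Finset.induction_on with
  | empty => simp [hordzero]
  | @insert a s' hx ih =>
    rw [Finset.sum_insert hx]
    exact le_trans (le_min (hts _ (Finset.mem_insert_self a s'))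
      (ih fun i hi => hts i (Finset.mem_insert_of_mem hi))) (hordadd _ _)

theorem stmt5_ordbasics {p : ℕ} [Fact (Nat.Prime p)] [Algebra ℚ_[p] E]
    (ord : E → WithTop ℝ)
    (hord0 : ∀ x : E, ord x = ⊤ ↔ x = 0)
    (hordmul : ∀ x y : E, ord (x * y) = ord x + ord y)
    (hordext : ∀ x : ℚ_[p], x ≠ 0 →
      ord (algebraMap ℚ_[p] E x) = ((x.valuation : ℝ) : WithTop ℝ)) :
    ord (0 : E) = ⊤ ∧ ord (1 : E) = 0 ∧ (∀ x : E, ord (-x) = ord x)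
      ∧ (∀ m : ℤ, (0 : WithTop ℝ) ≤ ord ((m : E)))
      ∧ (∀ m : ℤ, m ≠ 0 → ¬ (p : ℤ) ∣ m → ord ((m : E)) = 0) := by
  have hzero : ord (0 : E) = ⊤ := (hord0 0).mpr rfl
  have hone : ord (1 : E) = 0 := by
    have h1 := hordext 1 one_ne_zero
    rw [map_one, Padic.valuation_one] at h1
    simpa using h1
  have hneg1 : ord (-1 : E) = 0 := by
    have h2 := hordmul (-1 : E) (-1)
    rw [neg_mul_neg, one_mul, hone] at h2
    rcases eq_or_ne (ord (-1 : E)) ⊤ with ht | ht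
    · rw [ht] at h2; simp at h2
    · obtain ⟨r, hr⟩ := WithTop.ne_top_iff_exists.mp ht
      rw [← hr, ← WithTop.coe_add] at h2
      have hr2 : r + r = 0 := by exact_mod_cast h2.symm
      have : r = 0 := by linarith
      rw [← hr, this]; rfl
  have hneg : ∀ x : E, ord (-x) = ord x := by
    intro x
    have h3 := hordmul (-1 : E) x
    rwa [neg_one_mul, hneg1, zero_add] at h3
  have hint : ∀ m : ℤ, m ≠ 0 → ord ((m : E)) = ((padicValInt p m : ℝ) : WithTop ℝ) := by
    intro m hm
    have h1 : ((m : E)) = algebraMap ℚ_[p] E ((m : ℚ_[p])) := by rw [map_intCast]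
    have h2 : ((m : ℚ_[p])) ≠ 0 := Int.cast_ne_zero.mpr hm
    rw [h1, hordext _ h2, Padic.valuation_intCast]
    norm_num
  refine ⟨hzero, hone, hneg, ?_, ?_⟩
  · intro m
    rcases eq_or_ne m 0 with rfl | hm
    · simp [hzero]
    · rw [hint m hm]
      exact_mod_cast WithTop.coe_le_coe.mpr (by positivity)
  · intro m hm hpd
    rw [hint m hm, padicValInt.eq_zero_of_not_dvd hpd]
    simp

theorem stmt5_claimG (ord : E → WithTop ℝ)
    (hordmul : ∀ x y : E, ord (x * y) = ord x + ord y)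
    (hordadd : ∀ x y : E, min (ord x) (ord y) ≤ ord (x + y))
    (hordzero : ord 0 = ⊤) (hordone : ord 1 = 0)
    (hordneg : ∀ x : E, ord (-x) = ord x)
    (hcf : ℕ → E) (A : ℕ → ℕ → E) (dd : ℕ → E) (gcf : ℕ → E)
    (hAord : ∀ n k : ℕ, (0 : WithTop ℝ) ≤ ord (A n k))
    (hddord : ∀ n : ℕ, ord (dd (n+1)) = 0)
    (hgcf0 : gcf 0 = 1)
    (hgcfs : ∀ n : ℕ, gcf (n+1) = dd (n+1) *
        ∑ k ∈ Finset.range (n+1), (hcf (n+1-k) - A (n+1) k) * gcf k)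
    (w : ℕ → ℝ) (hw0 : w 0 = 0)
    (hwmono : ∀ k n : ℕ, k ≤ n → w n ≤ w k)
    (hwadd : ∀ k n : ℕ, k ≤ n → w n ≤ w k + w (n - k))
    (hwh : ∀ s : ℕ, ((w s : ℝ) : WithTop ℝ) ≤ ord (hcf s)) :
    ∀ n : ℕ, ((w n : ℝ) : WithTop ℝ) ≤ ord (gcf n) := by
  have hordsub : ∀ x y : E, min (ord x) (ord y) ≤ ord (x - y) := by
    intro x y
    rw [sub_eq_add_neg]
    have h1 := hordadd x (-y)
    rwa [hordneg] at h1
  intro n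
  induction n using Nat.strong_induction_on with
  | _ n ih =>
    rcases n with _ | n
    · rw [hgcf0, hordone, hw0]; simp
    · rw [hgcfs, hordmul, hddord, zero_add]
      apply stmt5_ordsum ord hordadd hordzero
      intro k hk
      have hk' : k ≤ n := Nat.lt_succ_iff.mp (Finset.mem_range.mp hk)
      calc ((w (n+1) : ℝ) : WithTop ℝ)
          ≤ ((min (w (n+1-k)) 0 + w k : ℝ) : WithTop ℝ) := by
            apply WithTop.coe_le_coe.mpr
            rw [← min_add_add_right]
            refine le_min (by
                have := hwadd k (n+1) (by omega); linarith) (by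
                have := hwmono k (n+1) (by omega); linarith)
        _ ≤ min (ord (hcf (n+1-k))) (ord (A (n+1) k)) + ord (gcf k) := by
            push_cast [WithTop.coe_min]
            exact add_le_add (min_le_min (hwh _) (by simpa using hAord (n+1) k))
              (ih k (by omega))
        _ ≤ ord (hcf (n+1-k) - A (n+1) k) + ord (gcf k) :=
            add_le_add (hordsub _ _) le_rfl
        _ = ord ((hcf (n+1-k) - A (n+1) k) * gcf k) := (hordmul _ _).symm

theorem stmt5_claimH (ord : E → WithTop ℝ)
    (hordmul : ∀ x y : E, ord (x * y) = ord x + ord y)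
    (hordadd : ∀ x y : E, min (ord x) (ord y) ≤ ord (x + y))
    (hordzero : ord 0 = ⊤)
    (hordneg : ∀ x : E, ord (-x) = ord x)
    (hcf : ℕ → E) (A : ℕ → ℕ → E) (gcf : ℕ → E)
    (hAord : ∀ n k : ℕ, (0 : WithTop ℝ) ≤ ord (A n k))
    (relH : ∀ n : ℕ, hcf n = (∑ k ∈ Finset.range (n+1), gcf k * A n k)
      - ∑ k ∈ Finset.range n, hcf k * gcf (n-k))
    (w : ℕ → ℝ)
    (hwmono : ∀ k n : ℕ, k ≤ n → w n ≤ w k)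
    (hwadd : ∀ k n : ℕ, k ≤ n → w n ≤ w k + w (n - k))
    (hwg : ∀ s : ℕ, ((w s : ℝ) : WithTop ℝ) ≤ ord (gcf s)) :
    ∀ n : ℕ, ((w n : ℝ) : WithTop ℝ) ≤ ord (hcf n) := by
  have hordsub : ∀ x y : E, min (ord x) (ord y) ≤ ord (x - y) := by
    intro x y
    rw [sub_eq_add_neg]
    have h1 := hordadd x (-y)
    rwa [hordneg] at h1
  intro n
  induction n using Nat.strong_induction_on with
  | _ n ih =>
    rw [relH n]
    refine le_trans (le_min ?_ ?_) (hordsub _ _)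
    · apply stmt5_ordsum ord hordadd hordzero
      intro k hk
      have hk' : k ≤ n := Nat.lt_succ_iff.mp (Finset.mem_range.mp hk)
      calc ((w n : ℝ) : WithTop ℝ)
          ≤ ((w k : ℝ) : WithTop ℝ) + 0 := by
            rw [add_zero]
            exact WithTop.coe_le_coe.mpr (hwmono k n hk')
        _ ≤ ord (gcf k) + ord (A n k) := add_le_add (hwg k) (hAord n k)
        _ = ord (gcf k * A n k) := (hordmul _ _).symm
    · apply stmt5_ordsum ord hordadd hordzero
      intro k hk
      have hk' : k < n := Finset.mem_range.mp hk
      calc ((w n : ℝ) : WithTop ℝ)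
          ≤ ((w k + w (n-k) : ℝ) : WithTop ℝ) :=
            WithTop.coe_le_coe.mpr (hwadd k n hk'.le)
        _ ≤ ord (hcf k) + ord (gcf (n-k)) := by
            push_cast
            exact add_le_add (ih k hk') (hwg _)
        _ = ord (hcf k * gcf (n-k)) := (hordmul _ _).symm

end StmtFiveAux

theorem stmt5
    (p : ℕ) [Fact (Nat.Prime p)]
    (E : Type*) [Field E] [Algebra ℚ_[p] E] [FiniteDimensional ℚ_[p] E]
    -- the p-adic valuation on E …
    (ord : E → WithTop ℝ)
    (hord0 : ∀ x : E, ord x = ⊤ ↔ x = 0)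
    (hordmul : ∀ x y : E, ord (x * y) = ord x + ord y)
    (hordadd : ∀ x y : E, min (ord x) (ord y) ≤ ord (x + y))
    (hordext : ∀ x : ℚ_[p], x ≠ 0 →
      ord (algebraMap ℚ_[p] E x) = ((x.valuation : ℝ) : WithTop ℝ))
    -- … and its ring of integers
    (OE : Subring E) (hOE : ∀ x : E, x ∈ OE ↔ 0 ≤ ord x)
    -- φ : the E-linear ring endomorphism of E[[π]] with φ(π) = (1+π)^p − 1
    (φ : PowerSeries E →+* PowerSeries E)
    (hφC : ∀ c : E, φ (C c) = C c)
    (hφX : φ X = (1 + X) ^ p - 1)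
    (hφcont : ∀ (f : PowerSeries E) (n : ℕ),
      coeff n (φ f) = coeff n (φ ((trunc (n + 1) f : Polynomial E) : PowerSeries E)))
    -- the statement
    (b : ℕ) (hb : 1 ≤ b)
    (h : PowerSeries E) (hh : constantCoeff h = 1) :
    (∃! g : PowerSeries E, constantCoeff g = 1 ∧ (⇑φ)^[b] g = h * g) ∧
    (∀ g : PowerSeries E, constantCoeff g = 1 → (⇑φ)^[b] g = h * g →
      ((∀ c : ℝ, 0 < c →
        ((∀ s : ℕ, ((-(s / c) : ℝ) : WithTop ℝ) ≤ ord (coeff s g)) ↔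
         (∀ s : ℕ, ((-(s / c) : ℝ) : WithTop ℝ) ≤ ord (coeff s h)))) ∧
       ((∀ s : ℕ, coeff s g ∈ OE) ↔ (∀ s : ℕ, coeff s h ∈ OE)))) := by
  classical
  obtain ⟨hordzero, hordone, hordneg, hordintnn, hordint0⟩ :=
    stmt5_ordbasics (p := p) ord hord0 hordmul hordext
  have hkb : ∀ (f : PowerSeries E) (n : ℕ), coeff n ((⇑φ)^[b] f)
      = ∑ k ∈ Finset.range (n+1), coeff k f
          * coeff n (((1 + X : PowerSeries E) ^ (p^b) - 1) ^ k) :=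
    stmt5_keyb p φ hφC hφX hφcont (stmt5_key1 p φ hφC hφX hφcont) b
  have hmulc : ∀ (g : PowerSeries E) (n : ℕ), coeff n (h * g)
      = ∑ k ∈ Finset.range (n+1), coeff k h * coeff (n-k) g := by
    intro g n
    rw [PowerSeries.coeff_mul]
    exact Finset.Nat.sum_antidiagonal_eq_sum_range_succ_mk _ n
  have two_le_p : 2 ≤ p := (Fact.out : p.Prime).two_le
  have hh0 : coeff 0 h = 1 := by rw [coeff_zero_eq_constantCoeff]; exact hh
  -- facts about the coefficients A n k = coeff n (Q^k)
  have hAdiag : ∀ n : ℕ, coeff n (((1 + X : PowerSeries E) ^ (p^b) - 1) ^ n)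
      = (((p^b : ℕ) : E)) ^ n := fun n => stmt5_Qdiag (p^b) n
  have hA00 : coeff 0 (((1 + X : PowerSeries E) ^ (p^b) - 1) ^ 0) = 1 := by
    simpa using hAdiag 0
  have hAord : ∀ n k : ℕ,
      (0 : WithTop ℝ) ≤ ord (coeff n (((1 + X : PowerSeries E) ^ (p^b) - 1) ^ k)) := by
    intro n k
    obtain ⟨m, hm⟩ := stmt5_Qint (E := E) (p^b) n k
    rw [hm]; exact hordintnn m
  -- the scalars p^{bn} - 1 are units of valuation 0
  have hPcast : ∀ n : ℕ, (((p^b : ℕ) : E)) ^ n - 1 = (((p : ℤ)^(b*n) - 1 : ℤ) : E) := by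
    intro n; push_cast; rw [pow_mul]
  have hPord : ∀ n : ℕ, ord ((((p^b : ℕ) : E)) ^ (n+1) - 1) = 0 := by
    intro n
    rw [hPcast]
    have hbn : b * (n+1) ≠ 0 := by positivity
    have h2 : 2 ≤ p^(b*(n+1)) := by
      calc 2 ≤ p := two_le_p
        _ = p^1 := (pow_one p).symm
        _ ≤ p^(b*(n+1)) := Nat.pow_le_pow_right (by omega) (by omega)
    have h2' : (2 : ℤ) ≤ (p : ℤ)^(b*(n+1)) := by exact_mod_cast h2
    apply hordint0
    · omega
    · intro hd
      have h3 : (p:ℤ) ∣ (p:ℤ)^(b*(n+1)) := dvd_pow_self _ hbn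
      have h4 : (p:ℤ) ∣ 1 := by
        have := dvd_sub h3 hd
        simpa using this
      have h5 := Int.le_of_dvd one_pos h4
      omega
  have hPne : ∀ n : ℕ, (((p^b : ℕ) : E)) ^ (n+1) - 1 ≠ 0 := by
    intro n hn
    have h6 := hPord n
    rw [hn, hordzero] at h6
    simp at h6
  have hddord : ∀ n : ℕ, ord (((((p^b : ℕ) : E)) ^ (n+1) - 1)⁻¹) = 0 := by
    intro n
    have h5 := hordmul ((((p^b : ℕ) : E)) ^ (n+1) - 1) (((((p^b : ℕ) : E)) ^ (n+1) - 1)⁻¹)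
    rw [mul_inv_cancel₀ (hPne n), hordone, hPord, zero_add] at h5
    exact h5.symm
  -- the canonical coefficient sequence
  have hgcfE : ∃ gcf : ℕ → E, gcf 0 = 1 ∧ ∀ n : ℕ, gcf (n+1) =
      ((((p^b : ℕ) : E)) ^ (n+1) - 1)⁻¹ *
      ∑ k ∈ Finset.range (n+1),
        (coeff (n+1-k) h - coeff (n+1) (((1 + X : PowerSeries E) ^ (p^b) - 1) ^ k)) * gcf k := by
    refine ⟨stmt5gc (fun n k => coeff n (((1 + X : PowerSeries E) ^ (p^b) - 1) ^ k))
      (fun k => coeff k h) (fun n => ((((p^b : ℕ) : E)) ^ n - 1)⁻¹), ?_, ?_⟩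
    · rw [stmt5gc]
    · intro n; exact stmt5gc_succ _ _ _ n
  obtain ⟨gcf, hgcf0, hgcfs⟩ := hgcfE
  -- reflection identity
  have hrefl : ∀ (u : ℕ → E) (n : ℕ),
      ∑ i ∈ Finset.range (n+1), coeff (i+1) h * u (n-i)
        = ∑ k ∈ Finset.range (n+1), coeff (n+1-k) h * u k := by
    intro u n
    have h0 := Finset.sum_range_reflect (fun k => coeff (n+1-k) h * u k) (n+1)
    rw [← h0]
    refine Finset.sum_congr rfl fun i hi => ?_
    have hi' : i < n+1 := Finset.mem_range.mp hi
    have h1 : n + 1 - 1 - i = n - i := by omega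
    rw [h1]
    have h2 : n + 1 - (n - i) = i + 1 := by omega
    rw [h2]
  -- every solution has coefficients gcf
  have main : ∀ g : PowerSeries E, constantCoeff g = 1 → (⇑φ)^[b] g = h * g →
      ∀ n : ℕ, coeff n g = gcf n := by
    intro g hg1 hge n
    induction n using Nat.strong_induction_on with
    | _ n ih =>
      rcases n with _ | n
      · rw [coeff_zero_eq_constantCoeff, hg1, hgcf0]
      · have e := congrArg (coeff (n+1)) hge
        rw [hkb, hmulc] at e
        rw [Finset.sum_range_succ
          (fun k => coeff k g * coeff (n+1) (((1 + X : PowerSeries E) ^ (p^b) - 1) ^ k))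
          (n+1), hAdiag (n+1)] at e
        rw [Finset.sum_range_succ' (fun k => coeff k h * coeff (n+1-k) g) (n+1)] at e
        simp only [Nat.succ_sub_succ, Nat.sub_zero, hh0, one_mul] at e
        rw [hrefl (fun k => coeff k g) n] at e
        have hsum : ∑ k ∈ Finset.range (n+1),
            (coeff (n+1-k) h - coeff (n+1) (((1 + X : PowerSeries E) ^ (p^b) - 1) ^ k)) * gcf k
            = ∑ k ∈ Finset.range (n+1),
            (coeff (n+1-k) h - coeff (n+1) (((1 + X : PowerSeries E) ^ (p^b) - 1) ^ k))
              * coeff k g :=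
          Finset.sum_congr rfl fun k hk => by rw [ih k (Finset.mem_range.mp hk)]
        rw [hgcfs n, hsum]
        have e2 : ((((p^b : ℕ) : E)) ^ (n+1) - 1) * coeff (n+1) g
            = ∑ k ∈ Finset.range (n+1),
              (coeff (n+1-k) h - coeff (n+1) (((1 + X : PowerSeries E) ^ (p^b) - 1) ^ k))
                * coeff k g := by
          simp only [sub_mul]
          rw [Finset.sum_sub_distrib]
          have hcomm : (∑ k ∈ Finset.range (n+1), coeff k g
              * coeff (n+1) (((1 + X : PowerSeries E) ^ (p^b) - 1) ^ k))
              = ∑ k ∈ Finset.range (n+1),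
                coeff (n+1) (((1 + X : PowerSeries E) ^ (p^b) - 1) ^ k) * coeff k g :=
            Finset.sum_congr rfl fun k _ => mul_comm _ _
          linear_combination e - hcomm
        rw [← e2, ← mul_assoc, inv_mul_cancel₀ (hPne n), one_mul]
  -- mk gcf is a solution
  have hexC : constantCoeff (PowerSeries.mk gcf) = 1 := by
    rw [← coeff_zero_eq_constantCoeff_apply, coeff_mk, hgcf0]
  have hexE : (⇑φ)^[b] (PowerSeries.mk gcf) = h * (PowerSeries.mk gcf) := by
    ext n
    rw [hkb, hmulc]
    simp only [coeff_mk]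
    rcases n with _ | n
    · simp [Finset.sum_range_one, hgcf0, hA00, hh0]
    · rw [Finset.sum_range_succ
        (fun k => gcf k * coeff (n+1) (((1 + X : PowerSeries E) ^ (p^b) - 1) ^ k))
        (n+1), hAdiag (n+1)]
      rw [Finset.sum_range_succ' (fun k => coeff k h * gcf (n+1-k)) (n+1)]
      simp only [Nat.succ_sub_succ, Nat.sub_zero, hh0, one_mul]
      rw [hrefl gcf n]
      have e3 : ((((p^b : ℕ) : E)) ^ (n+1) - 1) * gcf (n+1)
          = ∑ k ∈ Finset.range (n+1),
            (coeff (n+1-k) h - coeff (n+1) (((1 + X : PowerSeries E) ^ (p^b) - 1) ^ k))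
              * gcf k := by
        rw [hgcfs n, ← mul_assoc, mul_inv_cancel₀ (hPne n), one_mul]
      simp only [sub_mul] at e3
      rw [Finset.sum_sub_distrib] at e3
      have hcomm : (∑ k ∈ Finset.range (n+1), gcf k
          * coeff (n+1) (((1 + X : PowerSeries E) ^ (p^b) - 1) ^ k))
          = ∑ k ∈ Finset.range (n+1),
            coeff (n+1) (((1 + X : PowerSeries E) ^ (p^b) - 1) ^ k) * gcf k :=
        Finset.sum_congr rfl fun k _ => mul_comm _ _
      linear_combination e3 + hcomm
  -- the relation expressing h's coefficients
  have relH : ∀ n : ℕ, coeff n h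
      = (∑ k ∈ Finset.range (n+1), gcf k * coeff n (((1 + X : PowerSeries E) ^ (p^b) - 1) ^ k))
        - ∑ k ∈ Finset.range n, coeff k h * gcf (n-k) := by
    intro n
    have e1 : coeff n ((⇑φ)^[b] (PowerSeries.mk gcf)) = coeff n (h * PowerSeries.mk gcf) := by
      rw [hexE]
    rw [hkb, hmulc] at e1
    simp only [coeff_mk] at e1
    rw [Finset.sum_range_succ (fun k => coeff k h * gcf (n-k)) n] at e1
    rw [Nat.sub_self, hgcf0, mul_one] at e1
    linear_combination -e1
  constructor
  · refine ⟨PowerSeries.mk gcf, ⟨hexC, hexE⟩, ?_⟩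
    intro y hy
    ext n
    rw [main y hy.1 hy.2 n, coeff_mk]
  · intro g hg1 hg2
    have hcg : ∀ n : ℕ, coeff n g = gcf n := main g hg1 hg2
    have hwgOfH : ∀ (w : ℕ → ℝ), w 0 = 0 →
        (∀ k n : ℕ, k ≤ n → w n ≤ w k) →
        (∀ k n : ℕ, k ≤ n → w n ≤ w k + w (n - k)) →
        (∀ s : ℕ, ((w s : ℝ) : WithTop ℝ) ≤ ord (coeff s h)) →
        ∀ s : ℕ, ((w s : ℝ) : WithTop ℝ) ≤ ord (gcf s) := by
      intro w hw0 hwm hwa hwh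
      exact stmt5_claimG ord hordmul hordadd hordzero hordone hordneg
        (fun k => coeff k h)
        (fun n k => coeff n (((1 + X : PowerSeries E) ^ (p^b) - 1) ^ k))
        (fun n => ((((p^b : ℕ) : E)) ^ n - 1)⁻¹) gcf
        (fun n k => hAord n k) (fun n => hddord n) hgcf0 (fun n => hgcfs n)
        w hw0 hwm hwa hwh
    have hwhOfG : ∀ (w : ℕ → ℝ),
        (∀ k n : ℕ, k ≤ n → w n ≤ w k) →
        (∀ k n : ℕ, k ≤ n → w n ≤ w k + w (n - k)) →
        (∀ s : ℕ, ((w s : ℝ) : WithTop ℝ) ≤ ord (gcf s)) →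
        ∀ s : ℕ, ((w s : ℝ) : WithTop ℝ) ≤ ord (coeff s h) := by
      intro w hwm hwa hwg
      exact stmt5_claimH ord hordmul hordadd hordzero hordneg
        (fun k => coeff k h)
        (fun n k => coeff n (((1 + X : PowerSeries E) ^ (p^b) - 1) ^ k)) gcf
        (fun n k => hAord n k) (fun n => relH n)
        w hwm hwa hwg
    constructor
    · intro c hc
      have hwm : ∀ k n : ℕ, k ≤ n → -((n:ℝ)/c) ≤ -((k:ℝ)/c) := by
        intro k n hk
        have hkn : (k:ℝ) ≤ (n:ℝ) := Nat.cast_le.mpr hk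
        have : (k:ℝ)/c ≤ (n:ℝ)/c := by gcongr
        linarith
      have hwa : ∀ k n : ℕ, k ≤ n → -((n:ℝ)/c) ≤ -((k:ℝ)/c) + -((((n-k : ℕ)):ℝ)/c) := by
        intro k n hk
        have hnk : (((n-k : ℕ)):ℝ) = (n:ℝ) - (k:ℝ) := by
          push_cast [Nat.cast_sub hk]; ring
        rw [hnk]
        have : (k:ℝ)/c + ((n:ℝ)-(k:ℝ))/c = (n:ℝ)/c := by field_simp; ring
        linarith
      constructor
      · intro hgbd s
        refine hwhOfG (fun s => -((s:ℝ)/c)) hwm hwa ?_ s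
        intro t
        rw [← hcg t]
        exact hgbd t
      · intro hhbd s
        rw [hcg s]
        exact hwgOfH (fun s => -((s:ℝ)/c)) (by norm_num) hwm hwa hhbd s
    · simp only [hOE]
      constructor
      · intro hgbd s
        have h7 := hwhOfG (fun _ => (0:ℝ)) (fun _ _ _ => le_rfl) (by norm_num)
          (fun t => by rw [← hcg t]; simpa using hgbd t) s
        simpa using h7
      · intro hhbd s
        rw [hcg s]
        have h8 := hwgOfH (fun _ => (0:ℝ)) rfl (fun _ _ _ => le_rfl) (by norm_num)
          (fun t => by simpa using hhbd t) s
        simpa using h8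
end

section
/- Let γ be an E-linear ring endomorphism of E[[π]] with γ(π) ∈ π·E[[π]] and γ(π)/π ≡ c mod π·E[[π]] for some c ∈ Z_p^× satisfying c^n ≠ 1 for every integer n ≥ 1. Then for every f ∈ 1 + π·E[[π]] there exists a unique h ∈ 1 + π·E[[π]] such that γ(h) = f·h. -/
/-!
STATEMENT 7: Let γ be an E-linear ring endomorphism of E[[π]] with γ(π) ∈ π·E[[π]]
and γ(π)/π ≡ c mod π·E[[π]] for some c ∈ Z_p^× satisfying c^n ≠ 1 for every integer
n ≥ 1.  Then for every f ∈ 1 + π·E[[π]] there exists a unique h ∈ 1 + π·E[[π]] such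
that γ(h) = f·h.

Context: E is a finite extension of Q_p; "γ(π) ∈ π·E[[π]]" means the constant
coefficient of γ(π) vanishes, and "γ(π)/π ≡ c mod π" means the coefficient of π in
γ(π) is (the image in E of) c.
-/

open PowerSeries Finset

section Aux
variable {E : Type*} [Field E]

private lemma coeff_pow_eq_zero' (u : PowerSeries E) (hu : constantCoeff u = 0)
    {n m : ℕ} (h : n < m) : coeff n (u ^ m) = 0 := by
  have : X ^ m ∣ u ^ m := pow_dvd_pow_of_dvd (X_dvd_iff.2 hu) m
  exact (X_pow_dvd_iff.1 this) n h

private lemma coeff_pow_self' (u : PowerSeries E) (hu : constantCoeff u = 0) (n : ℕ) :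
    coeff n (u ^ n) = (coeff 1 u) ^ n := by
  induction n with
  | zero => simp
  | succ n ih =>
    rw [pow_succ, coeff_mul]
    rw [Finset.sum_eq_single (n, 1)]
    · rw [ih]; ring
    · rintro ⟨i, j⟩ hmem hne
      rw [Finset.HasAntidiagonal.mem_antidiagonal] at hmem
      rcases lt_trichotomy i n with hi | hi | hi
      · rw [coeff_pow_eq_zero' u hu hi, zero_mul]
      · have hj : j = 1 := by omega
        exact (hne (by rw [hi, hj])).elim
      · have : j = 0 := by omega
        subst this
        simp [coeff_zero_eq_constantCoeff, hu]
    · intro h; exact absurd (Finset.HasAntidiagonal.mem_antidiagonal.2 (by omega)) h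

private lemma coeff_gamma' (γ : PowerSeries E →+* PowerSeries E)
    (hγC : ∀ a : E, γ (C a) = C a)
    (hγX0 : constantCoeff (γ X) = 0) (h : PowerSeries E) (n : ℕ) :
    coeff n (γ h) = ∑ m ∈ range (n + 1), coeff m h * coeff n ((γ X) ^ m) := by
  set P := trunc (n + 1) h with hP
  have hdvd : X ^ (n + 1) ∣ (h - (P : PowerSeries E)) := by
    rw [X_pow_dvd_iff]
    intro m hm
    simp [hP, map_sub, Polynomial.coeff_coe, coeff_trunc, hm]
  obtain ⟨g, hg⟩ := hdvd
  have hh : h = (P : PowerSeries E) + X ^ (n + 1) * g := by rw [← hg]; ring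
  have h2 : coeff n (γ (X ^ (n + 1) * g)) = 0 := by
    rw [map_mul, map_pow]
    have : X ^ (n + 1) ∣ (γ X) ^ (n + 1) * γ g :=
      dvd_mul_of_dvd_left (pow_dvd_pow_of_dvd (X_dvd_iff.2 hγX0) _) _
    exact X_pow_dvd_iff.1 this n (by omega)
  have hPsum : (↑P : PowerSeries E) = ∑ m ∈ range (n + 1), C (P.coeff m) * X ^ m := by
    ext k
    rw [map_sum]
    simp only [Polynomial.coeff_coe, coeff_C_mul_X_pow]
    rw [Finset.sum_ite_eq (range (n + 1)) k (fun m => P.coeff m)]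
    by_cases hk : k < n + 1
    · rw [if_pos (mem_range.2 hk)]
    · rw [if_neg (by simpa using hk)]
      exact Polynomial.coeff_eq_zero_of_natDegree_lt
        (by have := natDegree_trunc_lt h n; rw [← hP] at this; omega)
  calc coeff n (γ h) = coeff n (γ ↑P) + coeff n (γ (X ^ (n + 1) * g)) := by
        conv_lhs => rw [hh]
        rw [map_add, map_add]
    _ = coeff n (γ ↑P) := by rw [h2, add_zero]
    _ = ∑ m ∈ range (n + 1), P.coeff m * coeff n ((γ X) ^ m) := by
        rw [hPsum, map_sum, map_sum]
        exact Finset.sum_congr rfl fun m _ => by rw [map_mul, hγC, map_pow, coeff_C_mul]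
    _ = ∑ m ∈ range (n + 1), coeff m h * coeff n ((γ X) ^ m) := by
        refine Finset.sum_congr rfl fun m hm => ?_
        rw [hP, coeff_trunc, if_pos (mem_range.1 hm)]

noncomputable def seqRec {α : Type*} (z : α) (F : ℕ → (ℕ → α) → α) : ℕ → α
  | n => F n (fun m => if _ : m < n then seqRec z F m else z)
decreasing_by assumption

lemma seqRec_eq {α : Type*} (z : α) (F : ℕ → (ℕ → α) → α) (n : ℕ) :
    seqRec z F n = F n (fun m => if _ : m < n then seqRec z F m else z) := by
  rw [seqRec]

end Aux

theorem stmt7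
    (p : ℕ) [Fact (Nat.Prime p)]
    (E : Type*) [Field E] [Algebra ℚ_[p] E] [FiniteDimensional ℚ_[p] E]
    -- γ : an E-linear ring endomorphism of E[[π]]
    (γ : PowerSeries E →+* PowerSeries E)
    (hγC : ∀ c : E, γ (C c) = C c)
    -- c ∈ Z_p^× with c^n ≠ 1 for all n ≥ 1
    (c : ℤ_[p]ˣ) (hc : ∀ n : ℕ, 1 ≤ n → ((c : ℤ_[p]) : ℚ_[p]) ^ n ≠ 1)
    -- γ(π) ∈ π·E[[π]] and γ(π)/π ≡ c mod π·E[[π]]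
    (hγX0 : constantCoeff (γ X) = 0)
    (hγX1 : coeff 1 (γ X) = algebraMap ℚ_[p] E ((c : ℤ_[p]) : ℚ_[p]))
    -- the statement
    (f : PowerSeries E) (hf : constantCoeff f = 1) :
    ∃! h : PowerSeries E, constantCoeff h = 1 ∧ γ h = f * h := by
  set c' : E := algebraMap ℚ_[p] E ((c : ℤ_[p]) : ℚ_[p]) with hc'def
  have hcne : ∀ n : ℕ, 1 ≤ n → c' ^ n - 1 ≠ 0 := by
    intro n hn
    rw [sub_ne_zero]
    intro h1
    refine hc n hn ((algebraMap ℚ_[p] E).injective ?_)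
    rw [map_pow, map_one]
    exact h1
  -- the recursively defined coefficient sequence
  set F : ℕ → (ℕ → E) → E := fun n prev =>
    if n = 0 then 1 else
      ((∑ k ∈ range n, coeff (k + 1) f * prev (n - (k + 1))) -
        ∑ m ∈ range n, prev m * coeff n ((γ X) ^ m)) / (c' ^ n - 1) with hF
  set a : ℕ → E := seqRec 0 F with ha
  have ha0 : a 0 = 1 := by rw [ha, seqRec_eq, hF]; simp
  have han : ∀ n : ℕ, 1 ≤ n → a n * (c' ^ n - 1) =
      (∑ k ∈ range n, coeff (k + 1) f * a (n - (k + 1))) -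
        ∑ m ∈ range n, a m * coeff n ((γ X) ^ m) := by
    intro n hn
    rw [ha, seqRec_eq, ← ha, hF]
    simp only [if_neg (by omega : ¬ n = 0)]
    rw [div_mul_cancel₀ _ (hcne n hn)]
    congr 1
    · exact Finset.sum_congr rfl fun k hk => by
        rw [dif_pos (by have := mem_range.1 hk; omega : n - (k + 1) < n)]
    · exact Finset.sum_congr rfl fun m hm => by rw [dif_pos (mem_range.1 hm)]
  -- the key reformulation of the n-th coefficient of the equation, n ≥ 1
  have key : ∀ (h : PowerSeries E), constantCoeff h = 1 → ∀ n : ℕ, 1 ≤ n →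
      (coeff n (γ h) = coeff n (f * h) ↔
        coeff n h * (c' ^ n - 1) =
          (∑ k ∈ range n, coeff (k + 1) f * coeff (n - (k + 1)) h) -
            ∑ m ∈ range n, coeff m h * coeff n ((γ X) ^ m)) := by
    intro h h0 n hn
    rw [coeff_gamma' γ hγC hγX0, coeff_mul,
      Finset.Nat.sum_antidiagonal_eq_sum_range_succ_mk,
      Finset.sum_range_succ, Finset.sum_range_succ',
      coeff_pow_self' _ hγX0, hγX1]
    simp only [Nat.sub_zero, Nat.sub_self, coeff_zero_eq_constantCoeff, hf, one_mul]
    constructor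
    · intro hEq; linear_combination hEq
    · intro hEq; linear_combination hEq
  -- characterization: h is a solution iff its coefficients are given by a
  have char : ∀ h : PowerSeries E,
      (constantCoeff h = 1 ∧ γ h = f * h) ↔ ∀ n, coeff n h = a n := by
    intro h
    constructor
    · rintro ⟨h0, heq⟩ n
      induction n using Nat.strong_induction_on with
      | _ n ih =>
        rcases Nat.eq_zero_or_pos n with rfl | hn
        · rw [coeff_zero_eq_constantCoeff, h0, ha0]
        · have e1 := (key h h0 n hn).1 (by rw [heq])
          have e2 := han n hn
          rw [show (∑ k ∈ range n, coeff (k + 1) f * coeff (n - (k + 1)) h) =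
              ∑ k ∈ range n, coeff (k + 1) f * a (n - (k + 1)) from
            Finset.sum_congr rfl fun k hk => by
              rw [ih _ (by have := mem_range.1 hk; omega)]] at e1
          rw [show (∑ m ∈ range n, coeff m h * coeff n ((γ X) ^ m)) =
              ∑ m ∈ range n, a m * coeff n ((γ X) ^ m) from
            Finset.sum_congr rfl fun m hm => by rw [ih _ (mem_range.1 hm)]] at e1
          have := e1.trans e2.symm
          exact mul_right_cancel₀ (hcne n hn) this
    · intro hcoeff
      have h0 : constantCoeff h = 1 := by
        rw [← coeff_zero_eq_constantCoeff, hcoeff 0, ha0]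
      refine ⟨h0, ?_⟩
      ext n
      rcases Nat.eq_zero_or_pos n with rfl | hn
      · rw [coeff_gamma' γ hγC hγX0, coeff_mul]
        simp [coeff_zero_eq_constantCoeff, hf, h0]
      · rw [key h h0 n hn]
        have e2 := han n hn
        simp only [hcoeff]
        exact e2
  -- conclude
  refine ⟨PowerSeries.mk a, ?_, ?_⟩
  · exact (char (PowerSeries.mk a)).2 (fun n => by rw [coeff_mk])
  · intro h hh
    have := (char h).1 hh
    ext n
    rw [this n, coeff_mk]
end

section
/- Let a ≥ 1 and let P_0, …, P_{a−1} ∈ M_{d×d}(E[[π]]) be matrices invertible over E[[π]], and G_0, …, G_{a−1} ∈ M_{d×d}(E[[π]]) (indices taken in Z/aZ). For j ∈ Z/aZ set P_{(j)} := P_{j+1}·φ(P_{j+2})·φ²(P_{j+3})·⋯·φ^{a−1}(P_{j+a}), where subscripts are taken mod a (so the last factor is φ^{a−1}(P_j)). Fix j₀ ∈ Z/aZ. Then the following are equivalent: (1) G_{j−1}·γ(P_j) = P_j·φ(G_j) holds for every j ∈ Z/aZ; (2) G_{j−1}·γ(P_j) = P_j·φ(G_j) holds for every j ∈ Z/aZ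 with j ≠ j₀, and G_{j₀}·γ(P_{(j₀)}) = P_{(j₀)}·φ^a(G_{j₀}). -/
open PowerSeries

private lemma aux_coeff_one_pow {E : Type*} [CommRing E] (m : ℕ) :
    coeff 1 ((1 + X) ^ m) = (m : E) := by
  induction m with
  | zero => simp
  | succ m ih =>
    rw [pow_succ, mul_add, mul_one, map_add, ih, coeff_succ_mul_X,
      coeff_zero_eq_constantCoeff]
    simp only [map_pow, map_add, constantCoeff_one, constantCoeff_X, add_zero, one_pow]
    push_cast; ring

private lemma aux_monomial_eq {E : Type*} [CommRing E] (n : ℕ) (c : E) :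
    monomial n c = C c * X ^ n := by
  ext m
  rw [coeff_monomial, coeff_C_mul, coeff_X_pow]
  split <;> simp

private lemma phi_injective {E : Type*} [Field E] [CharZero E] {p : ℕ} (hp : p ≠ 0)
    (φ : PowerSeries E →+* PowerSeries E)
    (hφC : ∀ c : E, φ (C c) = C c)
    (hφX : φ X = (1 + X) ^ p - 1)
    (hφcont : ∀ (f : PowerSeries E) (n : ℕ),
      coeff n (φ f) = coeff n (φ ((trunc (n + 1) f : Polynomial E) : PowerSeries E))) :
    Function.Injective φ := by
  obtain ⟨w, hw⟩ : (X : PowerSeries E) ∣ (1 + X) ^ p - 1 := by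
    rw [PowerSeries.X_dvd_iff]; simp
  have hw0 : constantCoeff w = (p : E) := by
    have h1 : coeff 1 ((1 + X : PowerSeries E) ^ p - 1) = (p : E) := by
      rw [map_sub, aux_coeff_one_pow]; simp
    rw [hw, coeff_succ_X_mul, coeff_zero_eq_constantCoeff] at h1
    exact h1
  have hgn : ∀ n : ℕ, coeff n (((1 + X : PowerSeries E) ^ p - 1) ^ n) = (p : E) ^ n := by
    intro n
    rw [hw, mul_pow]
    have := coeff_X_pow_mul (w ^ n) n 0
    rw [zero_add] at this
    rw [this, coeff_zero_eq_constantCoeff, map_pow, hw0]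
  have key : ∀ f : PowerSeries E, φ f = 0 → f = 0 := by
    intro f hf
    have hc : ∀ n, coeff n f = 0 := by
      intro n
      induction n using Nat.strong_induction_on with
      | _ n ih =>
        have h0 : trunc n f = 0 := by
          ext m
          rw [coeff_trunc, Polynomial.coeff_zero]
          split
          · exact ih m (by assumption)
          · rfl
        have h1 : ((trunc (n + 1) f : Polynomial E) : PowerSeries E)
            = C (coeff n f) * X ^ n := by
          rw [trunc_succ, h0, zero_add, Polynomial.coe_monomial, aux_monomial_eq]
        have h2 := hφcont f n
        rw [hf, h1, map_mul, map_pow, hφC, hφX, coeff_C_mul, hgn] at h2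
        simp only [map_zero] at h2
        have hpn : (p : E) ^ n ≠ 0 := pow_ne_zero _ (Nat.cast_ne_zero.mpr hp)
        rcases mul_eq_zero.mp h2.symm with h | h
        · exact h
        · exact absurd h hpn
    ext n
    simp [hc n]
  intro f g hfg
  have : φ (f - g) = 0 := by rw [map_sub, hfg, sub_self]
  exact sub_eq_zero.mp (key _ this)

theorem stmt13
    (p : ℕ) [Fact (Nat.Prime p)]
    (E : Type*) [Field E] [Algebra ℚ_[p] E] [FiniteDimensional ℚ_[p] E]
    (Zp' : Subring E)
    (hZp' : Zp' = ((algebraMap ℚ_[p] E).comp (PadicInt.Coe.ringHom (p := p))).range)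
    -- φ : the E-linear ring endomorphism of E[[π]] with φ(π) = (1+π)^p − 1
    (φ : PowerSeries E →+* PowerSeries E)
    (hφC : ∀ c : E, φ (C c) = C c)
    (hφX : φ X = (1 + X) ^ p - 1)
    (hφcont : ∀ (f : PowerSeries E) (n : ℕ),
      coeff n (φ f) = coeff n (φ ((trunc (n + 1) f : Polynomial E) : PowerSeries E)))
    -- γ and its properties
    (γ : PowerSeries E →+* PowerSeries E)
    (hγC : ∀ c : E, γ (C c) = C c)
    (hγφ : γ.comp φ = φ.comp γ)
    (hγX0 : constantCoeff (γ X) = 0)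
    (hγXZp : ∀ n, coeff n (γ X) ∈ Zp')
    (χ : ℤ_[p]ˣ)
    (hγX1 : coeff 1 (γ X) = algebraMap ℚ_[p] E ((χ : ℤ_[p]) : ℚ_[p]))
    -- the data
    (d : ℕ) (a : ℕ) [NeZero a]
    (P : ZMod a → Matrix (Fin d) (Fin d) (PowerSeries E))
    (hP : ∀ j, IsUnit (P j).det)
    (G : ZMod a → Matrix (Fin d) (Fin d) (PowerSeries E))
    (j₀ : ZMod a) :
    (∀ j : ZMod a, G (j - 1) * (P j).map ⇑γ = P j * (G j).map ⇑φ) ↔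
    ((∀ j : ZMod a, j ≠ j₀ → G (j - 1) * (P j).map ⇑γ = P j * (G j).map ⇑φ) ∧
      G j₀ *
        ((List.ofFn fun l : Fin a =>
            (P (j₀ + 1 + ((l : ℕ) : ZMod a))).map ((⇑φ)^[(l : ℕ)])).prod).map ⇑γ =
      (List.ofFn fun l : Fin a =>
          (P (j₀ + 1 + ((l : ℕ) : ZMod a))).map ((⇑φ)^[(l : ℕ)])).prod *
        (G j₀).map ((⇑φ)^[a])) := by
  classical
  have hcomm : ∀ x, γ (φ x) = φ (γ x) := fun x => RingHom.congr_fun hγφ x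
  have hcommiter : ∀ (k : ℕ) (x : PowerSeries E), γ ((⇑φ)^[k] x) = (⇑φ)^[k] (γ x) := by
    intro k
    induction k with
    | zero => intro x; rfl
    | succ k ih =>
      intro x
      rw [Function.iterate_succ_apply', hcomm, ih]
      exact (Function.iterate_succ_apply' _ _ _).symm
  set F : ℕ → Matrix (Fin d) (Fin d) (PowerSeries E) :=
    fun n => (P (j₀ + 1 + (n : ZMod a))).map ((⇑φ)^[n]) with hF
  have hofFn : (List.ofFn fun l : Fin a =>
      (P (j₀ + 1 + ((l : ℕ) : ZMod a))).map ((⇑φ)^[(l : ℕ)]))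
      = (List.range a).map F := by
    rw [List.ofFn_eq_map, ← List.map_coe_finRange_eq_range, List.map_map]
    rfl
  have hFγ : ∀ k : ℕ, (F k).map ⇑γ = ((P (j₀ + 1 + (k : ZMod a))).map ⇑γ).map ⇑(φ ^ k) := by
    intro k
    have hc : ⇑γ ∘ (⇑φ)^[k] = (⇑φ)^[k] ∘ ⇑γ := funext (hcommiter k)
    simp only [hF, Matrix.map_map, RingHom.coe_pow, hc]
  have key : ∀ k : ℕ,
      (∀ l : ℕ, l < k → G (j₀ + (l : ZMod a)) * (P (j₀ + 1 + (l : ZMod a))).map ⇑γ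
        = P (j₀ + 1 + (l : ZMod a)) * (G (j₀ + 1 + (l : ZMod a))).map ⇑φ) →
      G j₀ * (((List.range k).map F).prod).map ⇑γ
        = ((List.range k).map F).prod * (G (j₀ + (k : ZMod a))).map ((⇑φ)^[k]) := by
    intro k
    induction k with
    | zero => intro _; simp
    | succ k ih =>
      intro h
      have hk := h k (Nat.lt_succ_self k)
      have ihh := ih fun l hl => h l (hl.trans (Nat.lt_succ_self k))
      rw [List.range_succ, List.map_append, List.prod_append, List.map_singleton,
        List.prod_singleton]
      have hidx : j₀ + 1 + (k : ZMod a) = j₀ + (((k : ℕ) + 1 : ℕ) : ZMod a) := by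
        push_cast; ring
      have hGk : (G (j₀ + (k : ZMod a))).map ((⇑φ)^[k])
          = (G (j₀ + (k : ZMod a))).map ⇑(φ ^ k) := by rw [RingHom.coe_pow]
      have hFk : (P (j₀ + 1 + (k : ZMod a))).map ⇑(φ ^ k) = F k := by
        simp only [hF, RingHom.coe_pow]
      have e2 : (G (j₀ + (((k : ℕ) + 1 : ℕ) : ZMod a))).map ((⇑φ)^[k + 1])
          = ((G (j₀ + 1 + (k : ZMod a))).map ⇑φ).map ⇑(φ ^ k) := by
        rw [← hidx, Matrix.map_map, RingHom.coe_pow, Function.iterate_succ]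
      have hmid : (G (j₀ + (k : ZMod a))).map ((⇑φ)^[k]) * (F k).map ⇑γ
          = F k * (G (j₀ + (((k : ℕ) + 1 : ℕ) : ZMod a))).map ((⇑φ)^[k + 1]) := by
        rw [e2, hFγ k, hGk, ← Matrix.map_mul, hk, Matrix.map_mul, hFk]
      rw [Matrix.map_mul, ← mul_assoc, ihh, mul_assoc, hmid, ← mul_assoc]
  have hCharZero : CharZero E := charZero_of_injective_algebraMap (algebraMap ℚ_[p] E).injective
  have hpne : p ≠ 0 := (Fact.out : Nat.Prime p).ne_zero
  have hinj : Function.Injective ⇑φ := phi_injective hpne φ hφC hφX hφcont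
  constructor
  · intro h
    refine ⟨fun j _ => h j, ?_⟩
    have hall : ∀ l : ℕ, l < a → G (j₀ + (l : ZMod a)) * (P (j₀ + 1 + (l : ZMod a))).map ⇑γ
        = P (j₀ + 1 + (l : ZMod a)) * (G (j₀ + 1 + (l : ZMod a))).map ⇑φ := by
      intro l _
      have := h (j₀ + 1 + (l : ZMod a))
      rw [show j₀ + 1 + (l : ZMod a) - 1 = j₀ + (l : ZMod a) by ring] at this
      exact this
    have := key a hall
    rw [hofFn]
    simpa [ZMod.natCast_self] using this
  · rintro ⟨h1, h2⟩ j
    rcases eq_or_ne j j₀ with rfl | hj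
    swap
    · exact h1 j hj
    set b := a - 1 with hbdef
    have hb : b + 1 = a := Nat.succ_pred_eq_of_pos (NeZero.pos a)
    have hpartial := key b fun l hl => by
      have hne : j + 1 + (l : ZMod a) ≠ j := by
        intro hEq
        have h0 : ((l + 1 : ℕ) : ZMod a) = 0 := by
          push_cast
          linear_combination hEq
        rw [ZMod.natCast_eq_zero_iff] at h0
        exact Nat.not_dvd_of_pos_of_lt (Nat.succ_pos l) (by omega) h0
      have := h1 _ hne
      rw [show j + 1 + (l : ZMod a) - 1 = j + (l : ZMod a) by ring] at this
      exact this
    rw [hofFn, show a = b + 1 from hb.symm, List.range_succ, List.map_append, List.prod_append,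
      List.map_singleton, List.prod_singleton, Matrix.map_mul, ← mul_assoc, hpartial,
      mul_assoc, mul_assoc] at h2
    have hU : IsUnit (((List.range b).map F).prod) := by
      apply List.prod_isUnit
      intro M hM
      rw [List.mem_map] at hM
      obtain ⟨n, _, rfl⟩ := hM
      have hPU : IsUnit (P (j + 1 + (n : ZMod a))) :=
        (Matrix.isUnit_iff_isUnit_det _).mpr (hP _)
      have := hPU.map ((φ ^ n).mapMatrix :
        Matrix (Fin d) (Fin d) (PowerSeries E) →+* Matrix (Fin d) (Fin d) (PowerSeries E))
      simpa [hF, RingHom.mapMatrix_apply, RingHom.coe_pow] using this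
    have h3 := hU.mul_left_cancel h2
    have hL : (G (j + (b : ZMod a))).map ((⇑φ)^[b]) * (F b).map ⇑γ
        = ((G (j + (b : ZMod a))) * (P (j + 1 + (b : ZMod a))).map ⇑γ).map ⇑(φ ^ b) := by
      rw [Matrix.map_mul, hFγ b, RingHom.coe_pow]
    have hR : F b * (G j).map ((⇑φ)^[b + 1])
        = ((P (j + 1 + (b : ZMod a))) * (G j).map ⇑φ).map ⇑(φ ^ b) := by
      simp only [hF]
      rw [Matrix.map_mul, Matrix.map_map, RingHom.coe_pow, Function.iterate_succ]
    rw [hL, hR] at h3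
    have hinjb : Function.Injective ⇑(φ ^ b) := by
      rw [RingHom.coe_pow]
      exact hinj.iterate b
    have h4 : G (j + (b : ZMod a)) * (P (j + 1 + (b : ZMod a))).map ⇑γ
        = P (j + 1 + (b : ZMod a)) * (G j).map ⇑φ := by
      exact Matrix.ext fun i j => hinjb (congrFun (congrFun h3 i) j)
    have hbcast : ((b : ℕ) : ZMod a) = -1 := by
      have h5 : ((b : ℕ) : ZMod a) + 1 = 0 := by
        rw [show ((b : ℕ) : ZMod a) + 1 = ((b + 1 : ℕ) : ZMod a) by push_cast; ring, hb,
          ZMod.natCast_self]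
      linear_combination h5
    rw [hbcast, show j + 1 + -1 = j by ring, show j + -1 = j - 1 by ring] at h4
    exact h4
end

section
/- Suppose given, for each j ∈ Z/aZ, a diagonal matrix Ĝ_j ∈ Id + π·M_{d×d}(O_E[[π]]) and a matrix A_j ∈ M_{d×d}(O_E) with ord_p(A_j) = 0. Then there exists a unique family (Â_j)_{j∈Z/aZ} of matrices in M_{d×d}(E[[π]]) with Â_j ≡ A_j mod π such that, setting P̂_j := Â_j·Δ̂_{k_j}, one has Ĝ_{j−1}·γ(P̂_j) = P̂_j·φ(Ĝ_j) for all j ∈ Z/aZ. Moreover, for every n ≥ 0 the π^n-coefficient of each Â_j lies in β_{γ,n}^{−1}·M_{d×d}(O_E), and if in addition ord_p(β_{γ,n}) ≤ ⌊n·p/(p−1)²⌋ for all n ≥ 1, then each Â_j lies in M_{d×d}(R_{(p−1)²/p, E}). -/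
/-!
STATEMENT 16: Suppose given, for each j ∈ Z/aZ, a diagonal matrix
Ĝ_j ∈ Id + π·M_{d×d}(O_E[[π]]) and a matrix A_j ∈ M_{d×d}(O_E) with ord_p(A_j) = 0.
Then there exists a unique family (Â_j) of matrices over E[[π]] with Â_j ≡ A_j mod π
such that, with P̂_j := Â_j·Δ̂_{k_j}, one has Ĝ_{j−1}·γ(P̂_j) = P̂_j·φ(Ĝ_j) for all j.
Moreover, for every n ≥ 0 the π^n-coefficient of each Â_j lies in
β_{γ,n}^{−1}·M_{d×d}(O_E), and if in addition ord_p(β_{γ,n}) ≤ ⌊n·p/(p−1)²⌋ for all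
n ≥ 1, then each Â_j lies in M_{d×d}(R_{(p−1)²/p, E}).

Context: E a finite extension of Q_p with valuation ord and ring of integers O_E;
φ, q, γ, Z_p[[π]], χ, and the embedded Hodge polygon k as in the paper;
β_{γ,n} = ∏_{i=1}^n (χ^i − 1) (and β_{γ,0} = 1); R_{c,E} is the set of power series
Σ a_s π^s with ord(a_s) ≥ −s/c.
-/

open PowerSeries

namespace Stmt16Aux
variable {E : Type*} [Field E]

noncomputable def truncS (f : PowerSeries E) (n : ℕ) : PowerSeries E :=
  ∑ m ∈ Finset.range n, C (coeff m f) * X ^ m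

lemma coeff_truncS (f : PowerSeries E) (n m : ℕ) :
    coeff m (truncS f n) = if m < n then coeff m f else 0 := by
  rw [truncS, map_sum]
  simp only [coeff_C_mul, coeff_X_pow, mul_ite, mul_one, mul_zero]
  by_cases h : m < n
  · rw [Finset.sum_eq_single m]
    · simp [h]
    · intro b _ hb; simp [Ne.symm hb]
    · simp [h]
  · rw [if_neg h]
    apply Finset.sum_eq_zero; intro s hs
    simp only [Finset.mem_range] at hs
    have : m ≠ s := by omega
    simp [this]

lemma coeff_mul_lowvanish (F g : PowerSeries E) (n : ℕ)
    (hg : ∀ m < n, coeff m g = 0) :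
    coeff n (F * g) = constantCoeff F * coeff n g := by
  rw [coeff_mul, Finset.sum_eq_single (0, n)]
  · simp [coeff_zero_eq_constantCoeff]
  · rintro ⟨x, y⟩ hb hne
    simp only [Finset.HasAntidiagonal.mem_antidiagonal] at hb
    have hy : y < n := by
      rcases Nat.lt_or_ge y n with h | h
      · exact h
      · exfalso; apply hne
        have hyn : y = n := by omega
        have hx : x = 0 := by omega
        simp [hx, hyn]
    rw [hg y hy, mul_zero]
  · intro h; simp at h

lemma coeffsIn_mul (S : Subring E) (f g : PowerSeries E)
    (hf : ∀ n, coeff n f ∈ S) (hg : ∀ n, coeff n g ∈ S) :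
    ∀ n, coeff n (f * g) ∈ S := fun n => by
  rw [coeff_mul]; exact sum_mem fun p _ => S.mul_mem (hf _) (hg _)

lemma coeffsIn_pow (S : Subring E) (f : PowerSeries E)
    (hf : ∀ n, coeff n f ∈ S) (m : ℕ) : ∀ n, coeff n (f ^ m) ∈ S := by
  induction m with
  | zero => intro n; rw [pow_zero, coeff_one]; split <;> simp [S.one_mem, S.zero_mem]
  | succ l ih => intro n; rw [pow_succ]; exact coeffsIn_mul S _ _ ih hf n

lemma coeffsIn_X (S : Subring E) : ∀ n, coeff n (X : PowerSeries E) ∈ S := fun n => by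
  rw [coeff_X]; split <;> simp [S.one_mem, S.zero_mem]

section Gamma
variable (γ : PowerSeries E →+* PowerSeries E)
  (hγC : ∀ c : E, γ (C c) = C c)
  (hγX0 : constantCoeff (γ X) = 0) (χE : E)
  (hγX1 : coeff 1 (γ X) = χE)

include hγX0 in
lemma gdvd (n : ℕ) (f : PowerSeries E) (h : X ^ n ∣ f) : X ^ n ∣ γ f := by
  obtain ⟨g, rfl⟩ := h
  rw [map_mul, map_pow]
  exact Dvd.dvd.mul_right (pow_dvd_pow_of_dvd (X_dvd_iff.2 hγX0) n) _

include hγX0 hγX1 in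
lemma coeff_gX_pow_self (n : ℕ) : coeff n ((γ X) ^ n) = χE ^ n := by
  obtain ⟨h, hh⟩ := X_dvd_iff.2 hγX0
  have h0 : constantCoeff h = χE := by
    have := hγX1
    rw [hh] at this
    simpa [coeff_succ_X_mul, coeff_zero_eq_constantCoeff] using this
  rw [hh, mul_pow]
  have : coeff n (X ^ n * h ^ n) = coeff 0 (h ^ n) := by
    simpa using coeff_X_pow_mul (h ^ n) n 0
  rw [this, coeff_zero_eq_constantCoeff, map_pow, h0]

include hγC hγX0 hγX1 in
lemma coeff_gamma_lowvanish (f : PowerSeries E) (n : ℕ)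
    (hf : ∀ m < n, coeff m f = 0) :
    coeff n (γ f) = χE ^ n * coeff n f := by
  set c := coeff n f with hc
  have hg : ∀ m < n + 1, coeff m (f - C c * X ^ n) = 0 := by
    intro m hm
    rcases Nat.lt_or_ge m n with h | h
    · simp [hf m h, coeff_C_mul, coeff_X_pow, Nat.ne_of_lt h]
    · have : m = n := by omega
      subst this; simp [coeff_C_mul, coeff_X_pow, hc]
  have hsplit : γ f = C c * (γ X) ^ n + γ (f - C c * X ^ n) := by
    have h1 : f = C c * X ^ n + (f - C c * X ^ n) := by ring
    calc γ f = γ (C c * X ^ n + (f - C c * X ^ n)) := by rw [← h1]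
    _ = C c * (γ X) ^ n + γ (f - C c * X ^ n) := by
        rw [map_add, map_mul, map_pow, hγC]
  rw [hsplit, map_add, coeff_C_mul, coeff_gX_pow_self γ hγX0 χE hγX1]
  have hz : coeff n (γ (f - C c * X ^ n)) = 0 :=
    X_pow_dvd_iff.1 (gdvd γ hγX0 (n+1) _ (X_pow_dvd_iff.2 hg)) n (lt_add_one n)
  rw [hz, add_zero, mul_comm]

include hγC hγX0 hγX1 in
lemma keyB (H1 H2 : PowerSeries E) (h1 : constantCoeff H1 = 1)
    (h2 : constantCoeff H2 = 1) (f : PowerSeries E) (n : ℕ)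
    (hf : ∀ m < n, coeff m f = 0) :
    coeff n (H1 * γ f - H2 * f) = (χE ^ n - 1) * coeff n f := by
  have hγf : ∀ m < n, coeff m (γ f) = 0 :=
    X_pow_dvd_iff.1 (gdvd γ hγX0 n _ (X_pow_dvd_iff.2 hf))
  rw [map_sub, coeff_mul_lowvanish _ _ _ hγf, coeff_mul_lowvanish _ _ _ hf,
    h1, h2, coeff_gamma_lowvanish γ hγC hγX0 χE hγX1 f n hf]
  ring

end Gamma

noncomputable def solT (γ : PowerSeries E →+* PowerSeries E) (H1 H2 : PowerSeries E)
    (χE a0 : E) : ℕ → PowerSeries E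
  | 0 => C a0
  | n+1 => solT γ H1 H2 χE a0 n +
      C ((χE ^ (n+1) - 1)⁻¹ *
        -(coeff (n+1) (H1 * γ (solT γ H1 H2 χE a0 n) - H2 * solT γ H1 H2 χE a0 n))) * X ^ (n+1)

section Sol
variable (γ : PowerSeries E →+* PowerSeries E) (χE a0 : E) (H1 H2 : PowerSeries E)

lemma solT_high : ∀ n m : ℕ, n < m → coeff m (solT γ H1 H2 χE a0 n) = 0 := by
  intro n
  induction n with
  | zero => intro m hm; simp [solT, coeff_C]; omega
  | succ l ih =>
    intro m hm
    rw [solT, map_add, ih m (by omega), coeff_C_mul, coeff_X_pow, if_neg (by omega)]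
    ring

lemma solT_stab : ∀ n m : ℕ, m ≤ n →
    coeff m (solT γ H1 H2 χE a0 n) = coeff m (solT γ H1 H2 χE a0 m) := by
  intro n
  induction n with
  | zero => intro m hm; have : m = 0 := Nat.le_zero.1 hm; subst this; rfl
  | succ l ih =>
    intro m hm
    rcases Nat.lt_or_ge m (l+1) with h | h
    · rw [solT, map_add, coeff_C_mul, coeff_X_pow, if_neg (by omega), mul_zero, add_zero,
        ih m (by omega)]
    · have : m = l + 1 := by omega
      subst this; rfl

noncomputable def sol : PowerSeries E :=
  mk fun n => coeff n (solT γ H1 H2 χE a0 n)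

lemma sol_const : constantCoeff (sol γ χE a0 H1 H2) = a0 := by
  rw [← coeff_zero_eq_constantCoeff_apply, sol, coeff_mk]
  simp [solT]

lemma sol_sub (n : ℕ) : ∀ m < n + 1,
    coeff m (sol γ χE a0 H1 H2 - solT γ H1 H2 χE a0 n) = 0 := by
  intro m hm
  rw [map_sub, sol, coeff_mk, solT_stab γ χE a0 H1 H2 n m (by omega), sub_self]

variable (hγC : ∀ c : E, γ (C c) = C c)
  (hγX0 : constantCoeff (γ X) = 0)
  (hγX1 : coeff 1 (γ X) = χE)
  (hχ : ∀ n : ℕ, 1 ≤ n → χE ^ n ≠ 1)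
  (h1 : constantCoeff H1 = 1) (h2 : constantCoeff H2 = 1)

include hγC hγX0 hγX1 hχ h1 h2 in
lemma sol_spec : H1 * γ (sol γ χE a0 H1 H2) = H2 * sol γ χE a0 H1 H2 := by
  rw [← sub_eq_zero]
  apply PowerSeries.ext; intro n
  rw [map_zero]
  cases n with
  | zero =>
    have := keyB γ hγC hγX0 χE hγX1 H1 H2 h1 h2 (sol γ χE a0 H1 H2) 0 (by omega)
    simpa using this
  | succ m =>
    set S := sol γ χE a0 H1 H2 with hS
    set T := solT γ H1 H2 χE a0 m with hT
    have hg : ∀ l < m + 1, coeff l (S - T) = 0 := sol_sub γ χE a0 H1 H2 m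
    have hkey := keyB γ hγC hγX0 χE hγX1 H1 H2 h1 h2 (S - T) (m+1) hg
    have hSTcoeff : coeff (m+1) (S - T) = coeff (m+1) S := by
      rw [map_sub, solT_high γ χE a0 H1 H2 m (m+1) (lt_add_one m), sub_zero]
    have hSval : coeff (m+1) S =
        (χE ^ (m+1) - 1)⁻¹ * -(coeff (m+1) (H1 * γ T - H2 * T)) := by
      rw [hS, sol, coeff_mk]
      show coeff (m+1) (T + C ((χE ^ (m+1) - 1)⁻¹ *
        -(coeff (m+1) (H1 * γ T - H2 * T))) * X ^ (m+1)) = _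
      rw [map_add, solT_high γ χE a0 H1 H2 m (m+1) (lt_add_one m), coeff_C_mul,
        coeff_X_pow, if_pos rfl, mul_one, zero_add]
    have hne : χE ^ (m+1) - 1 ≠ 0 := sub_ne_zero.2 (hχ (m+1) (by omega))
    have hexpand : H1 * γ (S - T) - H2 * (S - T)
        = (H1 * γ S - H2 * S) - (H1 * γ T - H2 * T) := by
      rw [map_sub]; ring
    have hco := congrArg (coeff (m+1)) hexpand
    rw [hkey, hSTcoeff, hSval,
      map_sub (coeff (m+1)) (H1 * γ S - H2 * S) (H1 * γ T - H2 * T)] at hco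
    have hinv : (χE ^ (m+1) - 1) * ((χE ^ (m+1) - 1)⁻¹ *
        -(coeff (m+1) (H1 * γ T - H2 * T))) = -(coeff (m+1) (H1 * γ T - H2 * T)) := by
      field_simp
    linear_combination hinv - hco

include hγC hγX0 hγX1 hχ h1 h2 in
lemma sol_unique (f f' : PowerSeries E) (hf : H1 * γ f = H2 * f)
    (hf' : H1 * γ f' = H2 * f') (h0 : coeff 0 f = coeff 0 f') : f = f' := by
  have hzero : ∀ n, coeff n (f - f') = 0 := by
    intro n
    induction n using Nat.strong_induction_on with
    | _ n ih =>
      cases n with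
      | zero => rw [map_sub, h0, sub_self]
      | succ m =>
        have hkey := keyB γ hγC hγX0 χE hγX1 H1 H2 h1 h2 (f - f') (m+1)
          (fun l hl => ih l hl)
        have hD : H1 * γ (f - f') - H2 * (f - f') = 0 := by
          rw [map_sub]; linear_combination hf - hf'
        rw [hD, map_zero] at hkey
        have hne : χE ^ (m+1) - 1 ≠ 0 := sub_ne_zero.2 (hχ (m+1) (by omega))
        exact (mul_eq_zero.1 hkey.symm).resolve_left hne
  have : f - f' = 0 := PowerSeries.ext fun n => by rw [hzero n, map_zero]
  exact sub_eq_zero.1 this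

include hγC hγX0 hγX1 h1 h2 in
lemma recform (f : PowerSeries E) (hsol : H1 * γ f = H2 * f) (n : ℕ) :
    (χE ^ n - 1) * coeff n f =
      -(∑ s ∈ Finset.range n, coeff s f * coeff n (H1 * (γ X) ^ s - H2 * X ^ s)) := by
  have hg : ∀ m < n, coeff m (f - truncS f n) = 0 := fun m hm => by
    rw [map_sub, coeff_truncS, if_pos hm, sub_self]
  have hkey := keyB γ hγC hγX0 χE hγX1 H1 H2 h1 h2 (f - truncS f n) n hg
  have hco : coeff n (f - truncS f n) = coeff n f := by
    rw [map_sub, coeff_truncS, if_neg (lt_irrefl n), sub_zero]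
  have h0 : H1 * γ f - H2 * f = 0 := sub_eq_zero.2 hsol
  have hexp : H1 * γ (f - truncS f n) - H2 * (f - truncS f n)
      = -(H1 * γ (truncS f n) - H2 * truncS f n) := by
    rw [map_sub]; linear_combination h0
  have hexp2 : H1 * γ (truncS f n) - H2 * truncS f n
      = ∑ s ∈ Finset.range n, C (coeff s f) * (H1 * (γ X) ^ s - H2 * X ^ s) := by
    rw [truncS, map_sum, Finset.mul_sum, Finset.mul_sum, ← Finset.sum_sub_distrib]
    refine Finset.sum_congr rfl fun s _ => ?_
    rw [map_mul, map_pow, hγC]; ring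
  calc (χE ^ n - 1) * coeff n f
      = coeff n (H1 * γ (f - truncS f n) - H2 * (f - truncS f n)) := by rw [hkey, hco]
    _ = -(coeff n (H1 * γ (truncS f n) - H2 * truncS f n)) := by rw [hexp, map_neg]
    _ = -(∑ s ∈ Finset.range n, coeff s f * coeff n (H1 * (γ X) ^ s - H2 * X ^ s)) := by
        rw [hexp2, map_sum]
        simp only [coeff_C_mul]

include hγC hγX0 hγX1 h1 h2 in
lemma integral (S : Subring E) (hH1 : ∀ l, coeff l H1 ∈ S) (hH2 : ∀ l, coeff l H2 ∈ S)
    (hγXS : ∀ l, coeff l (γ X) ∈ S) (hχS : χE ∈ S)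
    (f : PowerSeries E) (hsol : H1 * γ f = H2 * f) (h0 : coeff 0 f ∈ S) :
    ∀ n, (∏ t ∈ Finset.Icc 1 n, (χE ^ t - 1)) * coeff n f ∈ S := by
  intro n
  induction n using Nat.strong_induction_on with
  | _ n ih =>
    cases n with
    | zero => simpa using h0
    | succ m =>
      have hrec := recform γ χE H1 H2 hγC hγX0 hγX1 h1 h2 f hsol (m+1)
      rw [Finset.prod_Icc_succ_top (by omega : 1 ≤ m + 1), mul_assoc, hrec, mul_neg,
        Finset.mul_sum]
      refine S.neg_mem (sum_mem fun s hs => ?_)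
      have hsm : s ≤ m := by
        have := Finset.mem_range.1 hs; omega
      have hsplit : (∏ t ∈ Finset.Icc 1 m, (χE ^ t - 1))
          = (∏ t ∈ Finset.Icc 1 s, (χE ^ t - 1)) * ∏ t ∈ Finset.Ioc s m, (χE ^ t - 1) := by
        rw [show Finset.Icc 1 m = Finset.Ioc 0 m from Finset.Icc_add_one_left_eq_Ioc 0 m,
          show Finset.Icc 1 s = Finset.Ioc 0 s from Finset.Icc_add_one_left_eq_Ioc 0 s]
        exact (Finset.prod_Ioc_consecutive _ (Nat.zero_le s) hsm).symm
      have heS : coeff (m+1) (H1 * (γ X) ^ s - H2 * X ^ s) ∈ S := by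
        rw [map_sub]
        exact S.sub_mem
          (coeffsIn_mul S _ _ hH1 (coeffsIn_pow S _ hγXS s) (m+1))
          (coeffsIn_mul S _ _ hH2 (coeffsIn_pow S _ (coeffsIn_X S) s) (m+1))
      have hterm : (∏ t ∈ Finset.Icc 1 m, (χE ^ t - 1)) *
            (coeff s f * coeff (m+1) (H1 * (γ X) ^ s - H2 * X ^ s))
          = (∏ t ∈ Finset.Ioc s m, (χE ^ t - 1)) *
            (((∏ t ∈ Finset.Icc 1 s, (χE ^ t - 1)) * coeff s f) *
              coeff (m+1) (H1 * (γ X) ^ s - H2 * X ^ s)) := by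
        rw [hsplit]; ring
      rw [hterm]
      exact S.mul_mem
        (prod_mem fun t _ => S.sub_mem (S.pow_mem hχS t) S.one_mem)
        (S.mul_mem (ih s (by omega)) heS)

end Sol
lemma psi_integral (ψ : PowerSeries E →+* PowerSeries E) (hψC : ∀ c : E, ψ (C c) = C c)
    (hψX0 : constantCoeff (ψ X) = 0) (S : Subring E)
    (hψX : ∀ l, coeff l (ψ X) ∈ S) (f : PowerSeries E) (hf : ∀ l, coeff l f ∈ S) :
    ∀ n, coeff n (ψ f) ∈ S := by
  intro n
  have hdecomp : ψ f = ψ (truncS f (n+1)) + ψ (f - truncS f (n+1)) := by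
    rw [← map_add]; congr 1; ring
  have hz : coeff n (ψ (f - truncS f (n+1))) = 0 :=
    X_pow_dvd_iff.1 (gdvd ψ hψX0 (n+1) _ (X_pow_dvd_iff.2
      (fun m hm => by rw [map_sub, coeff_truncS, if_pos hm, sub_self]))) n (lt_add_one n)
  rw [hdecomp, map_add, hz, add_zero, truncS, map_sum, map_sum]
  refine sum_mem fun m _ => ?_
  rw [map_mul, map_pow, hψC, coeff_C_mul]
  exact S.mul_mem (hf m) (coeffsIn_pow S _ hψX m n)

lemma one_add_X_pow_ne_one [CharZero E] (p : ℕ) (hp : 0 < p) :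
    ((1 + X) ^ p : PowerSeries E) ≠ 1 := by
  have h2 : (((1 + Polynomial.X) ^ p : Polynomial E) : PowerSeries E) = (1 + X) ^ p := by
    push_cast [Polynomial.coe_pow, Polynomial.coe_add, Polynomial.coe_one, Polynomial.coe_X]
    rfl
  have hdeg : (1 + Polynomial.X : Polynomial E).natDegree = 1 := by
    simpa [add_comm] using Polynomial.natDegree_X_add_C (1 : E)
  have hne : ((1 + Polynomial.X : Polynomial E) ^ p : Polynomial E) ≠ 1 := by
    intro h
    have := congrArg Polynomial.natDegree h
    rw [Polynomial.natDegree_pow, hdeg, Polynomial.natDegree_one] at this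
    omega
  rw [← h2]
  intro h
  apply hne
  rw [← Polynomial.coe_one] at h
  exact_mod_cast h

lemma ord_bound (ord : E → WithTop ℝ)
    (hordmul : ∀ x y : E, ord (x * y) = ord x + ord y)
    (β f : E) (c RB : ℝ) (h0 : 0 ≤ ord (β * f)) (hβ : ord β ≤ (c : WithTop ℝ))
    (hcRB : c ≤ RB) : ((-RB : ℝ) : WithTop ℝ) ≤ ord f := by
  rcases eq_or_ne (ord f) ⊤ with h | h
  · rw [h]; exact le_top
  obtain ⟨b, hb⟩ := WithTop.ne_top_iff_exists.1 h
  have hβt : ord β ≠ ⊤ := ne_top_of_le_ne_top WithTop.coe_ne_top hβ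
  obtain ⟨r, hr⟩ := WithTop.ne_top_iff_exists.1 hβt
  rw [hordmul] at h0
  rw [← hb, ← hr] at h0
  rw [← hr] at hβ
  rw [← hb]
  rw [← WithTop.coe_add] at h0
  have h0' : (0 : ℝ) ≤ r + b := by exact_mod_cast h0
  have hrc : r ≤ c := by exact_mod_cast hβ
  have : -RB ≤ b := by linarith
  exact_mod_cast this

end Stmt16Aux


theorem stmt16
    (p : ℕ) [Fact (Nat.Prime p)]
    (E : Type*) [Field E] [Algebra ℚ_[p] E] [FiniteDimensional ℚ_[p] E]
    (ord : E → WithTop ℝ)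
    (hord0 : ∀ x : E, ord x = ⊤ ↔ x = 0)
    (hordmul : ∀ x y : E, ord (x * y) = ord x + ord y)
    (hordadd : ∀ x y : E, min (ord x) (ord y) ≤ ord (x + y))
    (hordext : ∀ x : ℚ_[p], x ≠ 0 →
      ord (algebraMap ℚ_[p] E x) = ((x.valuation : ℝ) : WithTop ℝ))
    (OE : Subring E) (hOE : ∀ x : E, x ∈ OE ↔ 0 ≤ ord x)
    (Zp' : Subring E)
    (hZp' : Zp' = ((algebraMap ℚ_[p] E).comp (PadicInt.Coe.ringHom (p := p))).range)
    (φ : PowerSeries E →+* PowerSeries E)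
    (hφC : ∀ c : E, φ (C c) = C c)
    (hφX : φ X = (1 + X) ^ p - 1)
    (hφcont : ∀ (f : PowerSeries E) (n : ℕ),
      coeff n (φ f) = coeff n (φ ((trunc (n + 1) f : Polynomial E) : PowerSeries E)))
    (qq : PowerSeries E) (hqq : X * qq = (1 + X) ^ p - 1)
    (γ : PowerSeries E →+* PowerSeries E)
    (hγC : ∀ c : E, γ (C c) = C c)
    (hγφ : γ.comp φ = φ.comp γ)
    (hγZp : ∀ f : PowerSeries E, (∀ n, coeff n f ∈ Zp') → ∀ n, coeff n (γ f) ∈ Zp')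
    (hγX0 : constantCoeff (γ X) = 0)
    (hγXZp : ∀ n, coeff n (γ X) ∈ Zp')
    (χ : ℤ_[p]ˣ) (hχ : ∀ n : ℕ, 1 ≤ n → ((χ : ℤ_[p]) : ℚ_[p]) ^ n ≠ 1)
    (hγX1 : coeff 1 (γ X) = algebraMap ℚ_[p] E ((χ : ℤ_[p]) : ℚ_[p]))
    (hγq : ∃ u : PowerSeries E, constantCoeff u = 1 ∧ (∀ n, coeff n u ∈ Zp') ∧
      γ qq = qq * u)
    -- the embedded Hodge polygon
    (a : ℕ) [NeZero a] (d : ℕ) (hd : 0 < d)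
    (k : ZMod a → Fin d → ℕ)
    (hkmono : ∀ j, Antitone (k j))
    (hklast : ∀ j, k j ⟨d - 1, by omega⟩ = 0)
    -- the diagonal matrices Ĝ_j ∈ Id + π·M_{d×d}(O_E[[π]])
    (G : ZMod a → Matrix (Fin d) (Fin d) (PowerSeries E))
    (hGdiag : ∀ j i i', i ≠ i' → G j i i' = 0)
    (hGint : ∀ j i i', ∀ l : ℕ, coeff l (G j i i') ∈ OE)
    (hG0 : ∀ j i i', constantCoeff (G j i i') = if i = i' then (1 : E) else 0)
    -- the matrices A_j ∈ M_{d×d}(O_E) with ord_p(A_j) = 0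
    (A : ZMod a → Matrix (Fin d) (Fin d) E)
    (hAint : ∀ j i i', A j i i' ∈ OE)
    (hAord : ∀ j, ∃ i i', ord (A j i i') = ((0 : ℝ) : WithTop ℝ)) :
    -- there is a unique lift Â with the commutation property …
    (∃! Ahat : ZMod a → Matrix (Fin d) (Fin d) (PowerSeries E),
      (∀ j i i', constantCoeff (Ahat j i i') = A j i i') ∧
      (∀ j : ZMod a,
        G (j - 1) * ((Ahat j * Matrix.diagonal fun i => qq ^ (k j i)).map ⇑γ) =
          (Ahat j * Matrix.diagonal fun i => qq ^ (k j i)) * (G j).map ⇑φ)) ∧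
    -- … and it satisfies the coefficient bounds
    (∀ Ahat : ZMod a → Matrix (Fin d) (Fin d) (PowerSeries E),
      (∀ j i i', constantCoeff (Ahat j i i') = A j i i') →
      (∀ j : ZMod a,
        G (j - 1) * ((Ahat j * Matrix.diagonal fun i => qq ^ (k j i)).map ⇑γ) =
          (Ahat j * Matrix.diagonal fun i => qq ^ (k j i)) * (G j).map ⇑φ) →
      ((∀ (n : ℕ) (j : ZMod a) (i i' : Fin d),
        (∏ t ∈ Finset.Icc 1 n,
            ((algebraMap ℚ_[p] E ((χ : ℤ_[p]) : ℚ_[p])) ^ t - 1)) *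
          coeff n (Ahat j i i') ∈ OE) ∧
       ((∀ n : ℕ, 1 ≤ n →
          ord (∏ t ∈ Finset.Icc 1 n,
            ((algebraMap ℚ_[p] E ((χ : ℤ_[p]) : ℚ_[p])) ^ t - 1)) ≤
            (((n * p / (p - 1) ^ 2 : ℕ) : ℝ) : WithTop ℝ)) →
        ∀ (n : ℕ) (j : ZMod a) (i i' : Fin d),
          ((-(((n : ℝ) * p) / ((p : ℝ) - 1) ^ 2) : ℝ) : WithTop ℝ) ≤
            ord (coeff n (Ahat j i i'))))) := by
  classical
  obtain ⟨u, hu0, huZp, hγqq⟩ := hγq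
  have hCZ : CharZero E := charZero_of_injective_algebraMap (algebraMap ℚ_[p] E).injective
  have hp1 : 1 ≤ p := (Fact.out : p.Prime).one_lt.le
  set χE : E := algebraMap ℚ_[p] E ((χ : ℤ_[p]) : ℚ_[p]) with hχEdef
  have hχE : ∀ n : ℕ, 1 ≤ n → χE ^ n ≠ 1 := by
    intro n hn h
    apply hχ n hn
    apply (algebraMap ℚ_[p] E).injective
    rw [map_pow, map_one]
    exact h
  have hZpOE : ∀ x : E, x ∈ Zp' → x ∈ OE := by
    intro x hx
    rw [hZp'] at hx
    obtain ⟨y, rfl⟩ := hx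
    rw [hOE]
    rcases eq_or_ne y 0 with h | h
    · rw [h, map_zero]
      rw [(hord0 0).2 rfl]
      exact le_top
    · have hy : ((y : ℚ_[p])) ≠ 0 := fun hc => h (PadicInt.coe_eq_zero.1 hc)
      show (0 : WithTop ℝ) ≤ ord (algebraMap ℚ_[p] E (y : ℚ_[p]))
      rw [hordext _ hy]
      have h1 : (0 : ℤ) ≤ (y : ℚ_[p]).valuation := PadicInt.valuation_coe_nonneg (x := y)
      have h2 : (0 : ℝ) ≤ ((y : ℚ_[p]).valuation : ℝ) := by exact_mod_cast h1
      exact_mod_cast h2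
  have hχEZp : χE ∈ Zp' := by
    rw [hZp']; exact ⟨(χ : ℤ_[p]), rfl⟩
  have hχEOE : χE ∈ OE := hZpOE _ hχEZp
  -- φ basics
  have hφX0 : constantCoeff (φ X) = 0 := by
    rw [hφX, map_sub, map_pow, map_add, map_one, constantCoeff_X, add_zero, one_pow, sub_self]
  have hφ0 : ∀ f : PowerSeries E, constantCoeff (φ f) = constantCoeff f := by
    intro f
    have := Stmt16Aux.coeff_gamma_lowvanish φ hφC hφX0 (coeff 1 (φ X)) rfl f 0
      (by intro m hm; omega)
    simpa [coeff_zero_eq_constantCoeff] using this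
  have hφXOE : ∀ l, coeff l (φ X) ∈ OE := by
    intro l
    rw [hφX]
    have h1 : ∀ l, coeff l ((1 : PowerSeries E) + X) ∈ OE := by
      intro l
      rw [map_add, coeff_one]
      refine OE.add_mem ?_ (Stmt16Aux.coeffsIn_X OE l)
      split <;> simp [OE.one_mem, OE.zero_mem]
    rw [map_sub, coeff_one]
    refine OE.sub_mem (Stmt16Aux.coeffsIn_pow OE _ h1 p l) ?_
    split <;> simp [OE.one_mem, OE.zero_mem]
  have hφOE : ∀ f : PowerSeries E, (∀ l, coeff l f ∈ OE) → ∀ l, coeff l (φ f) ∈ OE :=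
    fun f hf => Stmt16Aux.psi_integral φ hφC hφX0 OE hφXOE f hf
  -- γ basics
  have hγXOE : ∀ l, coeff l (γ X) ∈ OE := fun l => hZpOE _ (hγXZp l)
  have huOE : ∀ l, coeff l u ∈ OE := fun l => hZpOE _ (huZp l)
  -- qq ≠ 0
  have hqqne : qq ≠ 0 := by
    intro h
    rw [h, mul_zero] at hqq
    have : ((1 + X) ^ p : PowerSeries E) = 1 := by
      have := hqq.symm
      rw [sub_eq_zero] at this
      exact this
    exact Stmt16Aux.one_add_X_pow_ne_one p (by omega) this
  -- per-entry data
  set H1 : ZMod a → Fin d → Fin d → PowerSeries E :=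
    fun j i i' => G (j - 1) i i * u ^ (k j i') with hH1def
  set H2 : ZMod a → Fin d → PowerSeries E := fun j i' => φ (G j i' i') with hH2def
  have hH1c : ∀ j i i', constantCoeff (H1 j i i') = 1 := by
    intro j i i'
    rw [hH1def]
    simp only [map_mul, map_pow, hu0, one_pow, mul_one]
    rw [hG0, if_pos rfl]
  have hH2c : ∀ j i', constantCoeff (H2 j i') = 1 := by
    intro j i'
    rw [hH2def]
    simp only [hφ0]
    rw [hG0, if_pos rfl]
  have hH1OE : ∀ j i i' l, coeff l (H1 j i i') ∈ OE := by
    intro j i i' l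
    exact Stmt16Aux.coeffsIn_mul OE _ _ (hGint (j-1) i i)
      (Stmt16Aux.coeffsIn_pow OE _ huOE _) l
  have hH2OE : ∀ j i' l, coeff l (H2 j i') ∈ OE := by
    intro j i' l
    exact hφOE _ (hGint j i' i') l
  -- entrywise form of the matrix equation
  have hLHS : ∀ (j : ZMod a) (M : Matrix (Fin d) (Fin d) (PowerSeries E)) (i i' : Fin d),
      (G (j-1) * ((M * Matrix.diagonal fun i => qq ^ (k j i)).map ⇑γ)) i i' =
        G (j-1) i i * (γ (M i i') * γ qq ^ (k j i')) := by
    intro j M i i'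
    rw [Matrix.mul_apply, Finset.sum_eq_single i]
    · rw [Matrix.map_apply, Matrix.mul_diagonal, map_mul, map_pow]
    · intro x _ hx
      rw [hGdiag _ _ _ (Ne.symm hx), zero_mul]
    · intro h; exact absurd (Finset.mem_univ i) h
  have hRHS : ∀ (j : ZMod a) (M : Matrix (Fin d) (Fin d) (PowerSeries E)) (i i' : Fin d),
      ((M * Matrix.diagonal fun i => qq ^ (k j i)) * (G j).map ⇑φ) i i' =
        (M i i' * qq ^ (k j i')) * φ (G j i' i') := by
    intro j M i i'
    rw [Matrix.mul_apply, Finset.sum_eq_single i']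
    · rw [Matrix.mul_diagonal, Matrix.map_apply]
    · intro x _ hx
      rw [Matrix.map_apply, hGdiag j x i' hx, map_zero, mul_zero]
    · intro h; exact absurd (Finset.mem_univ i') h
  have hiff : ∀ (j : ZMod a) (i i' : Fin d) (f : PowerSeries E),
      (G (j-1) i i * (γ f * γ qq ^ (k j i')) = (f * qq ^ (k j i')) * φ (G j i' i')) ↔
      (H1 j i i') * γ f = (H2 j i') * f := by
    intro j i i' f
    rw [hH1def, hH2def, hγqq, mul_pow]
    constructor
    · intro h
      have h2 : qq ^ (k j i') * ((G (j-1) i i * u ^ (k j i')) * γ f) =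
          qq ^ (k j i') * (φ (G j i' i') * f) := by linear_combination h
      exact mul_left_cancel₀ (pow_ne_zero _ hqqne) h2
    · intro h
      linear_combination qq ^ (k j i') * h
  have hmatiff : ∀ (j : ZMod a) (M : Matrix (Fin d) (Fin d) (PowerSeries E)),
      (G (j-1) * ((M * Matrix.diagonal fun i => qq ^ (k j i)).map ⇑γ) =
        (M * Matrix.diagonal fun i => qq ^ (k j i)) * (G j).map ⇑φ) ↔
      ∀ i i', (H1 j i i') * γ (M i i') = (H2 j i') * (M i i') := by
    intro j M
    constructor
    · intro h i i'
      have he := congrFun (congrFun h i) i'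
      rw [hLHS j M i i', hRHS j M i i'] at he
      exact (hiff j i i' (M i i')).1 he
    · intro h
      refine Matrix.ext fun i i' => ?_
      rw [hLHS j M i i', hRHS j M i i']
      exact (hiff j i i' (M i i')).2 (h i i')
  -- the canonical solution
  set Ahat₀ : ZMod a → Matrix (Fin d) (Fin d) (PowerSeries E) :=
    fun j => Matrix.of fun i i' =>
      Stmt16Aux.sol γ χE (A j i i') (H1 j i i') (H2 j i') with hAhat₀
  have hA₀const : ∀ j i i', constantCoeff (Ahat₀ j i i') = A j i i' :=
    fun j i i' => Stmt16Aux.sol_const γ χE (A j i i') (H1 j i i') (H2 j i')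
  have hA₀eq : ∀ j i i', (H1 j i i') * γ (Ahat₀ j i i') = (H2 j i') * (Ahat₀ j i i') :=
    fun j i i' => Stmt16Aux.sol_spec γ χE (A j i i') (H1 j i i') (H2 j i')
      hγC hγX0 hγX1 hχE (hH1c j i i') (hH2c j i')
  refine ⟨⟨Ahat₀, ⟨hA₀const, fun j => (hmatiff j (Ahat₀ j)).2 (hA₀eq j)⟩, ?_⟩, ?_⟩
  · -- uniqueness
    rintro B ⟨hBconst, hBeq⟩
    refine funext fun j => Matrix.ext fun i i' => ?_
    exact Stmt16Aux.sol_unique γ χE (H1 j i i') (H2 j i')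
      hγC hγX0 hγX1 hχE (hH1c j i i') (hH2c j i')
      (B j i i') (Ahat₀ j i i')
      ((hmatiff j (B j)).1 (hBeq j) i i') (hA₀eq j i i')
      (by rw [coeff_zero_eq_constantCoeff_apply, coeff_zero_eq_constantCoeff_apply,
            hBconst, hA₀const])
  · -- bounds for any solution
    intro Ahat hconst heq
    have hscalar : ∀ j i i', (H1 j i i') * γ (Ahat j i i') = (H2 j i') * (Ahat j i i') :=
      fun j i i' => (hmatiff j (Ahat j)).1 (heq j) i i'
    have hint : ∀ (n : ℕ) (j : ZMod a) (i i' : Fin d),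
        (∏ t ∈ Finset.Icc 1 n, (χE ^ t - 1)) * coeff n (Ahat j i i') ∈ OE := by
      intro n j i i'
      exact Stmt16Aux.integral γ χE (H1 j i i') (H2 j i')
        hγC hγX0 hγX1 (hH1c j i i') (hH2c j i') OE
        (hH1OE j i i') (hH2OE j i') hγXOE hχEOE
        (Ahat j i i') (hscalar j i i')
        (by rw [coeff_zero_eq_constantCoeff_apply, hconst]; exact hAint j i i') n
    refine ⟨hint, ?_⟩
    intro hβ n j i i'
    rcases Nat.eq_zero_or_pos n with hn | hn
    · subst hn
      have h0 : coeff 0 (Ahat j i i') ∈ OE := by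
        rw [coeff_zero_eq_constantCoeff_apply, hconst]; exact hAint j i i'
      have : (0 : WithTop ℝ) ≤ ord (coeff 0 (Ahat j i i')) := (hOE _).1 h0
      simpa using this
    · have hmem := hint n j i i'
      have h0 : (0 : WithTop ℝ) ≤
          ord ((∏ t ∈ Finset.Icc 1 n, (χE ^ t - 1)) * coeff n (Ahat j i i')) :=
        (hOE _).1 hmem
      have hβn := hβ n hn
      refine Stmt16Aux.ord_bound ord hordmul _ _
        (((n * p / (p - 1) ^ 2 : ℕ) : ℝ)) (((n : ℝ) * p) / ((p : ℝ) - 1) ^ 2)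
        h0 hβn ?_
      have h1 : ((n * p / (p - 1) ^ 2 : ℕ) : ℝ) ≤ ((n * p : ℕ) : ℝ) / (((p - 1) ^ 2 : ℕ) : ℝ) :=
        Nat.cast_div_le
      have h2 : (((p - 1) ^ 2 : ℕ) : ℝ) = ((p : ℝ) - 1) ^ 2 := by
        push_cast [Nat.cast_sub hp1]
        ring
      rw [h2] at h1
      calc ((n * p / (p - 1) ^ 2 : ℕ) : ℝ) ≤ ((n * p : ℕ) : ℝ) / ((p : ℝ) - 1) ^ 2 := h1
        _ = ((n : ℝ) * p) / ((p : ℝ) - 1) ^ 2 := by push_cast; ring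
end

section
/- Let Ĝ ∈ Id + π·M_{d×d}(O_E[[π]]) and let M_0 ∈ M_{d×d}(O_E). Then there exists a unique M ∈ M_{d×d}(E[[π]]) with constant term M_0 satisfying Ĝ·γ(M) = M·Ĝ. Moreover, for every n ≥ 0 the π^n-coefficient of M lies in β_{γ,n}^{−1}·M_{d×d}(O_E), and if in addition ord_p(β_{γ,n}) ≤ ⌊n·p/(p−1)²⌋ for all n ≥ 1, then M ∈ M_{d×d}(R_{(p−1)²/p, E}). -/
/-!
STATEMENT 17: Let Ĝ ∈ Id + π·M_{d×d}(O_E[[π]]) and M_0 ∈ M_{d×d}(O_E).  Then there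
exists a unique M ∈ M_{d×d}(E[[π]]) with constant term M_0 satisfying Ĝ·γ(M) = M·Ĝ.
Moreover, for every n ≥ 0 the π^n-coefficient of M lies in β_{γ,n}^{−1}·M_{d×d}(O_E),
and if in addition ord_p(β_{γ,n}) ≤ ⌊n·p/(p−1)²⌋ for all n ≥ 1, then
M ∈ M_{d×d}(R_{(p−1)²/p, E}).

Context: E a finite extension of Q_p with valuation ord and ring of integers O_E;
γ an E-linear ring endomorphism of E[[π]] preserving Z_p[[π]], with
γ(π) ∈ π·Z_p[[π]] and γ(π) ≡ χ·π mod π² for a unit χ ∈ Z_p^× with χ^n ≠ 1 for all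
n ≥ 1; β_{γ,n} = ∏_{i=1}^n (χ^i − 1) (and β_{γ,0} = 1); R_{c,E} is the set of power
series Σ a_s π^s with ord(a_s) ≥ −s/c.
-/

open PowerSeries

/-- Auxiliary: recursion producing all values below `n`. -/
def stmt17gaux {α : Type*} [Zero α] (M₀ : α) (step : ℕ → (ℕ → α) → α) : ℕ → ℕ → α
  | 0, _ => 0
  | n + 1, k =>
    if k < n then stmt17gaux M₀ step n k
    else if k = n then (if n = 0 then M₀ else step n (stmt17gaux M₀ step n)) else 0

/-- Auxiliary: the recursively defined sequence. -/
def stmt17gA {α : Type*} [Zero α] (M₀ : α) (step : ℕ → (ℕ → α) → α) (n : ℕ) : α :=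
  stmt17gaux M₀ step (n + 1) n

theorem stmt17gaux_eq {α : Type*} [Zero α] (M₀ : α) (step : ℕ → (ℕ → α) → α) :
    ∀ n k, k < n → stmt17gaux M₀ step n k = stmt17gA M₀ step k := by
  intro n
  induction n with
  | zero => intro k hk; exact absurd hk (Nat.not_lt_zero k)
  | succ n ih =>
    intro k hk
    rcases Nat.lt_or_ge k n with h | h
    · rw [show stmt17gaux M₀ step (n + 1) k
          = if k < n then stmt17gaux M₀ step n k
            else if k = n then (if n = 0 then M₀ else step n (stmt17gaux M₀ step n)) else 0
          from rfl, if_pos h, ih k h]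
    · have hk' : k = n := by omega
      subst hk'
      rfl

theorem stmt17gA_zero {α : Type*} [Zero α] (M₀ : α) (step : ℕ → (ℕ → α) → α) :
    stmt17gA M₀ step 0 = M₀ := by
  simp [stmt17gA, stmt17gaux]

theorem stmt17gA_succ {α : Type*} [Zero α] (M₀ : α) (step : ℕ → (ℕ → α) → α)
    (hstep : ∀ n B B', (∀ k, k < n → B k = B' k) → step n B = step n B') (n : ℕ) :
    stmt17gA M₀ step (n + 1) = step (n + 1) (stmt17gA M₀ step) := by
  have h1 : stmt17gA M₀ step (n + 1) = step (n + 1) (stmt17gaux M₀ step (n + 1)) := by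
    simp [stmt17gA, stmt17gaux]
  rw [h1]
  exact hstep (n + 1) _ _ (fun k hk => stmt17gaux_eq M₀ step (n + 1) k hk)

/-- The recursion step data. -/
def stmt17F {E : Type*} [CommRing E] {d : ℕ} (Gc : ℕ → Matrix (Fin d) (Fin d) E)
    (c : ℕ → ℕ → E) (n : ℕ) (B : ℕ → Matrix (Fin d) (Fin d) E) :
    Matrix (Fin d) (Fin d) E :=
  (∑ k ∈ Finset.range n, B k * Gc (n - k))
    - (∑ k ∈ Finset.range n, c n k • B k)
    - ∑ j ∈ Finset.range n, Gc (j + 1) *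
        (∑ k ∈ Finset.range (n - (j + 1) + 1), c (n - (j + 1)) k • B k)

theorem stmt17F_congr {E : Type*} [CommRing E] {d : ℕ} (Gc : ℕ → Matrix (Fin d) (Fin d) E)
    (c : ℕ → ℕ → E) (n : ℕ) (B B' : ℕ → Matrix (Fin d) (Fin d) E)
    (h : ∀ k, k < n → B k = B' k) : stmt17F Gc c n B = stmt17F Gc c n B' := by
  rcases Nat.eq_zero_or_pos n with rfl | hn
  · simp [stmt17F]
  · unfold stmt17F
    congr 1
    · congr 1
      · exact Finset.sum_congr rfl fun k hk => by rw [h k (Finset.mem_range.mp hk)]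
      · exact Finset.sum_congr rfl fun k hk => by rw [h k (Finset.mem_range.mp hk)]
    · refine Finset.sum_congr rfl fun j hj => ?_
      have hj' := Finset.mem_range.mp hj
      congr 1
      refine Finset.sum_congr rfl fun k hk => ?_
      have hk' := Finset.mem_range.mp hk
      rw [h k (by omega)]

theorem stmt17abel {E M : Type*} [Ring E] [AddCommGroup M] [Module E M]
    (S1 T X2 Bn : M) (χn : E) :
    (S1 + (T + χn • Bn) = X2 + Bn) ↔ ((χn - 1) • Bn = X2 - T - S1) := by
  rw [sub_smul, one_smul]
  constructor <;> intro h
  · calc χn • Bn - Bn = S1 + (T + χn • Bn) - T - S1 - Bn := by abel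
      _ = X2 + Bn - T - S1 - Bn := by rw [h]
      _ = X2 - T - S1 := by abel
  · calc S1 + (T + χn • Bn) = (χn • Bn - Bn) + S1 + T + Bn := by abel
      _ = (X2 - T - S1) + S1 + T + Bn := by rw [h]
      _ = X2 + Bn := by abel

theorem stmt17
    (p : ℕ) [Fact (Nat.Prime p)]
    (E : Type*) [Field E] [Algebra ℚ_[p] E] [FiniteDimensional ℚ_[p] E]
    (ord : E → WithTop ℝ)
    (hord0 : ∀ x : E, ord x = ⊤ ↔ x = 0)
    (hordmul : ∀ x y : E, ord (x * y) = ord x + ord y)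
    (hordadd : ∀ x y : E, min (ord x) (ord y) ≤ ord (x + y))
    (hordext : ∀ x : ℚ_[p], x ≠ 0 →
      ord (algebraMap ℚ_[p] E x) = ((x.valuation : ℝ) : WithTop ℝ))
    (OE : Subring E) (hOE : ∀ x : E, x ∈ OE ↔ 0 ≤ ord x)
    (Zp' : Subring E)
    (hZp' : Zp' = ((algebraMap ℚ_[p] E).comp (PadicInt.Coe.ringHom (p := p))).range)
    -- γ and its properties
    (γ : PowerSeries E →+* PowerSeries E)
    (hγC : ∀ c : E, γ (C c) = C c)
    (hγZp : ∀ f : PowerSeries E, (∀ n, coeff n f ∈ Zp') → ∀ n, coeff n (γ f) ∈ Zp')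
    (hγX0 : constantCoeff (γ X) = 0)
    (hγXZp : ∀ n, coeff n (γ X) ∈ Zp')
    (χ : ℤ_[p]ˣ) (hχ : ∀ n : ℕ, 1 ≤ n → ((χ : ℤ_[p]) : ℚ_[p]) ^ n ≠ 1)
    (hγX1 : coeff 1 (γ X) = algebraMap ℚ_[p] E ((χ : ℤ_[p]) : ℚ_[p]))
    -- the data
    (d : ℕ) (hd : 0 < d)
    (G : Matrix (Fin d) (Fin d) (PowerSeries E))
    (hGint : ∀ i i', ∀ l : ℕ, coeff l (G i i') ∈ OE)
    (hG0 : ∀ i i', constantCoeff (G i i') = if i = i' then (1 : E) else 0)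
    (M₀ : Matrix (Fin d) (Fin d) E)
    (hM₀ : ∀ i i', M₀ i i' ∈ OE) :
    (∃! M : Matrix (Fin d) (Fin d) (PowerSeries E),
      (∀ i i', constantCoeff (M i i') = M₀ i i') ∧
      G * M.map ⇑γ = M * G) ∧
    (∀ M : Matrix (Fin d) (Fin d) (PowerSeries E),
      (∀ i i', constantCoeff (M i i') = M₀ i i') →
      G * M.map ⇑γ = M * G →
      ((∀ (n : ℕ) (i i' : Fin d),
        (∏ t ∈ Finset.Icc 1 n,
            ((algebraMap ℚ_[p] E ((χ : ℤ_[p]) : ℚ_[p])) ^ t - 1)) *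
          coeff n (M i i') ∈ OE) ∧
       ((∀ n : ℕ, 1 ≤ n →
          ord (∏ t ∈ Finset.Icc 1 n,
            ((algebraMap ℚ_[p] E ((χ : ℤ_[p]) : ℚ_[p])) ^ t - 1)) ≤
            (((n * p / (p - 1) ^ 2 : ℕ) : ℝ) : WithTop ℝ)) →
        ∀ (n : ℕ) (i i' : Fin d),
          ((-(((n : ℝ) * p) / ((p : ℝ) - 1) ^ 2) : ℝ) : WithTop ℝ) ≤
            ord (coeff n (M i i'))))) := by
  classical
  set χE : E := algebraMap ℚ_[p] E ((χ : ℤ_[p]) : ℚ_[p]) with hχEdef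
  set c : ℕ → ℕ → E := fun m k => coeff m (γ X ^ k) with hcdef
  set cMat : ℕ → Matrix (Fin d) (Fin d) (PowerSeries E) → Matrix (Fin d) (Fin d) E :=
    fun n P => P.map ⇑(coeff n) with hcMatdef
  set βE : ℕ → E := fun n => ∏ t ∈ Finset.Icc 1 n, (χE ^ t - 1) with hβdef
  -- basic membership facts
  have hZpOE : ∀ x : E, x ∈ Zp' → x ∈ OE := by
    intro x hx
    rw [hZp', RingHom.mem_range] at hx
    obtain ⟨z, hz⟩ := hx
    rw [hOE, ← hz, RingHom.comp_apply]
    have hh : (PadicInt.Coe.ringHom (p := p)) z = (z : ℚ_[p]) := rfl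
    rw [hh]
    by_cases h0 : (z : ℚ_[p]) = 0
    · rw [h0, map_zero, (hord0 0).mpr rfl]
      exact le_top
    · rw [hordext _ h0]
      have h1 : (0 : ℝ) ≤ ((z : ℚ_[p]).valuation : ℝ) := by
        exact_mod_cast PadicInt.valuation_coe_nonneg (x := z)
      exact_mod_cast h1
  have hχEZp : χE ∈ Zp' := by
    rw [hZp']
    exact ⟨(χ : ℤ_[p]), rfl⟩
  have hχEOE : χE ∈ OE := hZpOE _ hχEZp
  have hunit : ∀ t : ℕ, 1 ≤ t → χE ^ t - 1 ≠ 0 := by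
    intro t ht h
    have h1 : χE ^ t = 1 := by rwa [sub_eq_zero] at h
    have h2 : algebraMap ℚ_[p] E (((χ : ℤ_[p]) : ℚ_[p]) ^ t) = algebraMap ℚ_[p] E 1 := by
      rw [map_pow, map_one]; exact h1
    exact hχ t ht ((algebraMap ℚ_[p] E).injective h2)
  -- facts about c
  have hXdvd : (X : PowerSeries E) ∣ γ X := PowerSeries.X_dvd_iff.mpr hγX0
  have hc_Zp : ∀ k m, c m k ∈ Zp' := by
    intro k
    induction k with
    | zero =>
      intro m
      have : c m 0 = coeff m (1 : PowerSeries E) := by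
        simp only [hcdef]; rw [pow_zero]
      rw [this, PowerSeries.coeff_one]
      split_ifs
      exacts [one_mem _, zero_mem _]
    | succ k ih =>
      intro m
      have : c m (k + 1) = ∑ ij ∈ Finset.HasAntidiagonal.antidiagonal m,
          coeff ij.1 (γ X ^ k) * coeff ij.2 (γ X) := by
        simp only [hcdef]; rw [pow_succ, PowerSeries.coeff_mul]
      rw [this]
      exact sum_mem fun ij _ => mul_mem (ih ij.1) (hγXZp ij.2)
  have hc_OE : ∀ m k, c m k ∈ OE := fun m k => hZpOE _ (hc_Zp k m)
  have hc_diag : ∀ k, c k k = χE ^ k := by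
    obtain ⟨h, hh⟩ := hXdvd
    have hh0 : constantCoeff h = χE := by
      have h1 := hγX1
      rw [hh, PowerSeries.coeff_succ_X_mul, PowerSeries.coeff_zero_eq_constantCoeff_apply] at h1
      exact h1
    intro k
    have h2 : γ X ^ k = X ^ k * h ^ k := by rw [hh, mul_pow]
    have h3 := PowerSeries.coeff_X_pow_mul (h ^ k) k 0
    rw [zero_add] at h3
    calc c k k = coeff k (γ X ^ k) := rfl
      _ = coeff 0 (h ^ k) := by rw [h2, h3]
      _ = χE ^ k := by
          rw [PowerSeries.coeff_zero_eq_constantCoeff_apply, map_pow, hh0]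
  -- the coefficient formula for γ
  have hγcoeff : ∀ (f : PowerSeries E) (n : ℕ),
      coeff n (γ f) = ∑ k ∈ Finset.range (n + 1), coeff k f * c n k := by
    intro f n
    obtain ⟨g, hg⟩ : (X : PowerSeries E) ^ (n + 1) ∣
        (f - ∑ k ∈ Finset.range (n + 1), C (coeff k f) * X ^ k) := by
      rw [PowerSeries.X_pow_dvd_iff]
      intro m hm
      rw [map_sub, map_sum]
      simp_rw [PowerSeries.coeff_C_mul, PowerSeries.coeff_X_pow, mul_ite, mul_one, mul_zero]
      rw [Finset.sum_ite_eq, if_pos (Finset.mem_range.mpr hm), sub_self]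
    have hf : f = (∑ k ∈ Finset.range (n + 1), C (coeff k f) * X ^ k) + X ^ (n + 1) * g := by
      rw [← hg]; ring
    have h1 : coeff n (γ (X ^ (n + 1) * g)) = 0 := by
      have hdvd2 : (X : PowerSeries E) ^ (n + 1) ∣ γ (X ^ (n + 1) * g) := by
        rw [map_mul, map_pow]
        exact Dvd.dvd.mul_right (pow_dvd_pow_of_dvd hXdvd (n + 1)) _
      exact PowerSeries.X_pow_dvd_iff.mp hdvd2 n (Nat.lt_succ_self n)
    calc coeff n (γ f)
        = coeff n (γ (∑ k ∈ Finset.range (n + 1), C (coeff k f) * X ^ k))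
            + coeff n (γ (X ^ (n + 1) * g)) := by
          rw [← map_add, ← map_add, ← hf]
      _ = ∑ k ∈ Finset.range (n + 1), coeff k f * c n k := by
          rw [h1, add_zero, map_sum, map_sum]
          refine Finset.sum_congr rfl fun k _ => ?_
          rw [map_mul, map_pow, hγC, PowerSeries.coeff_C_mul]
  -- matrix coefficient machinery
  have hmulcoeff : ∀ (P Q : Matrix (Fin d) (Fin d) (PowerSeries E)) (n : ℕ),
      cMat n (P * Q) = ∑ k ∈ Finset.range (n + 1), cMat k P * cMat (n - k) Q := by
    intro P Q n
    ext i i'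
    simp only [hcMatdef, Matrix.map_apply, Matrix.mul_apply, Matrix.sum_apply, map_sum,
      PowerSeries.coeff_mul, Finset.Nat.sum_antidiagonal_eq_sum_range_succ_mk]
    exact Finset.sum_comm
  have hγMat : ∀ (N : Matrix (Fin d) (Fin d) (PowerSeries E)) (m : ℕ),
      cMat m (N.map ⇑γ) = ∑ k ∈ Finset.range (m + 1), c m k • cMat k N := by
    intro N m
    ext i i'
    simp only [hcMatdef, Matrix.map_apply, Matrix.sum_apply, Matrix.smul_apply, smul_eq_mul]
    rw [hγcoeff (N i i') m]
    exact Finset.sum_congr rfl fun k _ => mul_comm _ _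
  have hG0M : cMat 0 G = 1 := by
    ext i i'
    simp only [hcMatdef, Matrix.map_apply, PowerSeries.coeff_zero_eq_constantCoeff_apply,
      Matrix.one_apply, hG0]
  have hGcOE : ∀ l (i i' : Fin d), cMat l G i i' ∈ OE := fun l i i' => hGint i i' l
  -- the key equivalence
  have hkey : ∀ M : Matrix (Fin d) (Fin d) (PowerSeries E),
      (G * M.map ⇑γ = M * G) ↔
        (∀ n, (χE ^ n - 1) • cMat n M = stmt17F (fun l => cMat l G) c n (fun k => cMat k M)) := by
    intro M
    have step1 : (G * M.map ⇑γ = M * G) ↔ ∀ n, cMat n (G * M.map ⇑γ) = cMat n (M * G) := by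
      constructor
      · intro h n; rw [h]
      · intro h
        ext i i' n
        have h2 := congrArg (fun Mx : Matrix (Fin d) (Fin d) E => Mx i i') (h n)
        simpa [hcMatdef, Matrix.map_apply] using h2
    rw [step1]
    refine forall_congr' fun n => ?_
    rw [hmulcoeff, hmulcoeff]
    rw [show (∑ l ∈ Finset.range (n + 1), cMat l G * cMat (n - l) (M.map ⇑γ))
          = (∑ l ∈ Finset.range n, cMat (l + 1) G * cMat (n - (l + 1)) (M.map ⇑γ))
              + cMat 0 G * cMat (n - 0) (M.map ⇑γ)
        from Finset.sum_range_succ' _ n]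
    rw [show (∑ k ∈ Finset.range (n + 1), cMat k M * cMat (n - k) G)
          = (∑ k ∈ Finset.range n, cMat k M * cMat (n - k) G) + cMat n M * cMat (n - n) G
        from Finset.sum_range_succ _ n]
    rw [Nat.sub_zero, Nat.sub_self, hG0M, one_mul, mul_one]
    simp only [hγMat]
    rw [show (∑ k ∈ Finset.range (n + 1), c n k • cMat k M)
          = (∑ k ∈ Finset.range n, c n k • cMat k M) + c n n • cMat n M
        from Finset.sum_range_succ _ n]
    rw [hc_diag n]
    simp only [stmt17F]
    exact stmt17abel _ _ _ _ _
  -- the recursive sequence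
  set step : ℕ → (ℕ → Matrix (Fin d) (Fin d) E) → Matrix (Fin d) (Fin d) E :=
    fun n B => (χE ^ n - 1)⁻¹ • stmt17F (fun l => cMat l G) c n B with hstepdef
  set A : ℕ → Matrix (Fin d) (Fin d) E := stmt17gA M₀ step with hAdef
  have hstepcongr : ∀ n B B', (∀ k, k < n → B k = B' k) → step n B = step n B' := by
    intro n B B' h
    simp only [hstepdef]
    rw [stmt17F_congr _ _ n B B' h]
  have hA0 : A 0 = M₀ := stmt17gA_zero M₀ step
  have hArec : ∀ n, (χE ^ n - 1) • A n = stmt17F (fun l => cMat l G) c n A := by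
    intro n
    cases n with
    | zero =>
      rw [pow_zero, sub_self, zero_smul]
      simp [stmt17F]
    | succ m =>
      have h1 : A (m + 1) = step (m + 1) A := stmt17gA_succ M₀ step hstepcongr m
      rw [h1]
      simp only [hstepdef]
      rw [smul_smul, mul_inv_cancel₀ (hunit (m + 1) (Nat.succ_le_succ (Nat.zero_le m))), one_smul]
  -- characterization of solutions
  have hcoeffA : ∀ M : Matrix (Fin d) (Fin d) (PowerSeries E),
      ((∀ i i', constantCoeff (M i i') = M₀ i i') ∧ G * M.map ⇑γ = M * G)
        ↔ ∀ n, cMat n M = A n := by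
    intro M
    constructor
    · rintro ⟨h0, heq⟩
      have hB := (hkey M).mp heq
      intro n
      induction n using Nat.strong_induction_on with
      | _ n ih =>
        cases n with
        | zero =>
          rw [hA0]
          ext i i'
          simp only [hcMatdef, Matrix.map_apply, PowerSeries.coeff_zero_eq_constantCoeff_apply]
          exact h0 i i'
        | succ m =>
          have h1 := hB (m + 1)
          rw [stmt17F_congr (fun l => cMat l G) c (m + 1) (fun k => cMat k M) A
            (fun k hk => ih k hk)] at h1
          rw [← hArec (m + 1)] at h1
          have h2 := congrArg (fun X => (χE ^ (m + 1) - 1)⁻¹ • X) h1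
          simpa [smul_smul,
            inv_mul_cancel₀ (hunit (m + 1) (Nat.succ_le_succ (Nat.zero_le m)))] using h2
    · intro hcA
      refine ⟨?_, ?_⟩
      · intro i i'
        have h2 := congrArg (fun Mx : Matrix (Fin d) (Fin d) E => Mx i i') (hcA 0)
        simpa [hcMatdef, Matrix.map_apply, PowerSeries.coeff_zero_eq_constantCoeff_apply,
          hA0] using h2
      · rw [hkey M]
        intro n
        rw [stmt17F_congr (fun l => cMat l G) c n (fun k => cMat k M) A (fun k _ => hcA k),
          hcA n]
        exact hArec n
  -- β facts
  have hIcc : ∀ n : ℕ, Finset.Icc 1 n = Finset.Ioc 0 n := by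
    intro n; ext t; simp only [Finset.mem_Icc, Finset.mem_Ioc]; omega
  have hβ0 : βE 0 = 1 := by
    simp only [hβdef]
    rw [show Finset.Icc 1 0 = (∅ : Finset ℕ) from Finset.Icc_eq_empty (by omega),
      Finset.prod_empty]
  have hβsucc : ∀ m, βE (m + 1) = βE m * (χE ^ (m + 1) - 1) := by
    intro m
    simp only [hβdef]
    rw [hIcc, hIcc]
    exact Finset.prod_Ioc_succ_top (Nat.zero_le m) _
  have hβfac : ∀ k m, k ≤ m → βE m = βE k * ∏ t ∈ Finset.Ioc k m, (χE ^ t - 1) := by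
    intro k m hkm
    simp only [hβdef]
    rw [hIcc, hIcc]
    exact (Finset.prod_Ioc_consecutive _ (Nat.zero_le k) hkm).symm
  have hfacOE : ∀ t : ℕ, χE ^ t - 1 ∈ OE := fun t => sub_mem (pow_mem hχEOE t) (one_mem OE)
  -- matrix membership helpers
  have hsub_memM : ∀ (B C : Matrix (Fin d) (Fin d) E),
      (∀ i i', B i i' ∈ OE) → (∀ i i', C i i' ∈ OE) → ∀ i i', (B - C) i i' ∈ OE := by
    intro B C h1 h2 i i'
    rw [Matrix.sub_apply]; exact sub_mem (h1 i i') (h2 i i')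
  have hsum_memM : ∀ (s : Finset ℕ) (f : ℕ → Matrix (Fin d) (Fin d) E),
      (∀ k ∈ s, ∀ i i', f k i i' ∈ OE) → ∀ i i', (∑ k ∈ s, f k) i i' ∈ OE := by
    intro s f h i i'
    rw [Matrix.sum_apply]; exact sum_mem fun k hk => h k hk i i'
  have hmul_memM : ∀ (B C : Matrix (Fin d) (Fin d) E),
      (∀ i i', B i i' ∈ OE) → (∀ i i', C i i' ∈ OE) → ∀ i i', (B * C) i i' ∈ OE := by
    intro B C h1 h2 i i'
    rw [Matrix.mul_apply]; exact sum_mem fun j _ => mul_mem (h1 i j) (h2 j i')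
  have hsmul_memM : ∀ (a : E) (B : Matrix (Fin d) (Fin d) E),
      a ∈ OE → (∀ i i', B i i' ∈ OE) → ∀ i i', (a • B) i i' ∈ OE := by
    intro a B ha h i i'
    rw [Matrix.smul_apply, smul_eq_mul]; exact mul_mem ha (h i i')
  -- integrality of the sequence
  have hint : ∀ n (i i' : Fin d), (βE n • A n) i i' ∈ OE := by
    intro n
    induction n using Nat.strong_induction_on with
    | _ n ih =>
      cases n with
      | zero =>
        intro i i'
        rw [hβ0, one_smul, hA0]
        exact hM₀ i i'
      | succ m =>
        have hlow : ∀ k, k ≤ m → ∀ i i', (βE m • A k) i i' ∈ OE := by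
          intro k hk
          have hsplit : βE m • A k = (∏ t ∈ Finset.Ioc k m, (χE ^ t - 1)) • (βE k • A k) := by
            rw [smul_smul, mul_comm, ← hβfac k m hk]
          rw [hsplit]
          exact hsmul_memM _ _ (prod_mem fun t _ => hfacOE t) (ih k (Nat.lt_succ_of_le hk))
        have hrec2 : βE (m + 1) • A (m + 1)
            = βE m • stmt17F (fun l => cMat l G) c (m + 1) A := by
          rw [hβsucc m, mul_smul, hArec (m + 1)]
        rw [hrec2]
        rw [show stmt17F (fun l => cMat l G) c (m + 1) A =
              (∑ k ∈ Finset.range (m + 1), A k * cMat ((m + 1) - k) G)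
                - (∑ k ∈ Finset.range (m + 1), c (m + 1) k • A k)
                - ∑ j ∈ Finset.range (m + 1), cMat (j + 1) G *
                    (∑ k ∈ Finset.range ((m + 1) - (j + 1) + 1), c ((m + 1) - (j + 1)) k • A k)
            from rfl]
        rw [smul_sub, smul_sub, Finset.smul_sum, Finset.smul_sum, Finset.smul_sum]
        refine hsub_memM _ _ (hsub_memM _ _ ?_ ?_) ?_
        · refine hsum_memM _ _ fun k hk => ?_
          rw [← smul_mul_assoc]
          exact hmul_memM _ _ (hlow k (Nat.lt_succ_iff.mp (Finset.mem_range.mp hk))) (hGcOE _)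
        · refine hsum_memM _ _ fun k hk => ?_
          rw [smul_comm]
          exact hsmul_memM _ _ (hc_OE _ _) (hlow k (Nat.lt_succ_iff.mp (Finset.mem_range.mp hk)))
        · refine hsum_memM _ _ fun j hj => ?_
          rw [← Matrix.mul_smul, Finset.smul_sum]
          refine hmul_memM _ _ (hGcOE _) (hsum_memM _ _ fun k hk => ?_)
          rw [smul_comm]
          refine hsmul_memM _ _ (hc_OE _ _) (hlow k ?_)
          have h1 := Finset.mem_range.mp hk
          omega
  -- assemble the statement
  constructor
  · -- existence and uniqueness
    have hMex : ∀ n, cMat n (Matrix.of fun i i' => PowerSeries.mk fun m => A m i i') = A n := by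
      intro n
      ext i i'
      simp [hcMatdef, Matrix.map_apply, PowerSeries.coeff_mk]
    obtain ⟨h0, heq⟩ := (hcoeffA _).mpr hMex
    refine ⟨_, ⟨h0, heq⟩, ?_⟩
    intro M' hM'
    have h1 := (hcoeffA M').mp hM'
    ext i i' n
    have h2 := congrArg (fun Mx : Matrix (Fin d) (Fin d) E => Mx i i')
      ((h1 n).trans (hMex n).symm)
    simpa [hcMatdef, Matrix.map_apply] using h2
  · -- the bounds
    intro M h0 heq
    have hcA : ∀ n, cMat n M = A n := (hcoeffA M).mp ⟨h0, heq⟩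
    have hentry : ∀ n (i i' : Fin d), coeff n (M i i') = A n i i' := by
      intro n i i'
      have h2 := congrArg (fun Mx : Matrix (Fin d) (Fin d) E => Mx i i') (hcA n)
      simpa [hcMatdef, Matrix.map_apply] using h2
    have hmemcoeff : ∀ n (i i' : Fin d), βE n * coeff n (M i i') ∈ OE := by
      intro n i i'
      rw [hentry n i i']
      have h3 := hint n i i'
      simpa [Matrix.smul_apply, smul_eq_mul] using h3
    constructor
    · intro n i i'
      exact hmemcoeff n i i'
    · intro hβb n i i'
      rcases Nat.eq_zero_or_pos n with rfl | hn
      · have hmem0 : coeff 0 (M i i') ∈ OE := by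
          rw [hentry 0 i i', hA0]
          exact hM₀ i i'
        have h4 := (hOE _).mp hmem0
        simpa using h4
      · have hb' : ord (βE n) ≤ (((n * p / (p - 1) ^ 2 : ℕ) : ℝ) : WithTop ℝ) := hβb n hn
        have hβne : βE n ≠ 0 := by
          have hne : ∀ t ∈ Finset.Icc 1 n, (χE ^ t - 1) ≠ 0 :=
            fun t ht => hunit t (Finset.mem_Icc.mp ht).1
          simp only [hβdef]
          exact Finset.prod_ne_zero_iff.mpr hne
        have h0le : (0 : WithTop ℝ) ≤ ord (βE n) + ord (coeff n (M i i')) := by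
          rw [← hordmul]
          exact (hOE _).mp (hmemcoeff n i i')
        have hbne : ord (βE n) ≠ ⊤ := fun h => hβne ((hord0 _).mp h)
        obtain ⟨b, hbdef⟩ := WithTop.ne_top_iff_exists.mp hbne
        have hp1 : 1 ≤ p := (Fact.out : p.Prime).one_lt.le
        have hqle : ((n * p / (p - 1) ^ 2 : ℕ) : ℝ) ≤ (n : ℝ) * p / ((p : ℝ) - 1) ^ 2 := by
          calc ((n * p / (p - 1) ^ 2 : ℕ) : ℝ)
              ≤ ((n * p : ℕ) : ℝ) / (((p - 1) ^ 2 : ℕ) : ℝ) := Nat.cast_div_le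
            _ = (n : ℝ) * p / ((p : ℝ) - 1) ^ 2 := by
                rw [Nat.cast_mul, Nat.cast_pow, Nat.cast_sub hp1, Nat.cast_one]
        cases hx : ord (coeff n (M i i')) with
        | top => exact le_top
        | coe x =>
          rw [hx, ← hbdef] at h0le
          rw [← hbdef] at hb'
          have h0le' : 0 ≤ b + x := by exact_mod_cast h0le
          have hble : b ≤ ((n * p / (p - 1) ^ 2 : ℕ) : ℝ) := by exact_mod_cast hb'
          have hfin : -((n : ℝ) * p / ((p : ℝ) - 1) ^ 2) ≤ x := by linarith
          show ((-(((n : ℝ) * p) / ((p : ℝ) - 1) ^ 2) : ℝ) : WithTop ℝ) ≤ (x : WithTop ℝ)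
          exact_mod_cast hfin
end

section
/- Let a ≥ 1 and let k_0, …, k_{a−1} be nonnegative integers. For each j let A_j ∈ GL_2(O_E) and Δ_j := diag(p^{k_j}, 1), and set P := (A_0·Δ_0)·(A_1·Δ_1)·⋯·(A_{a−1}·Δ_{a−1}) ∈ M_{2×2}(O_E); note ord_p(det P) = Σ_{j=0}^{a−1} k_j. Let t := tr(P). Then the following are equivalent: (a) P has an eigenvalue λ (a root, in an algebraic closure of E equipped with the unique extension of ord_p, of the characteristic polynomial of P) with ord_p(λ) = Σ_{j∈J} k_j for some subset J ⊆ {0, …, a−1}; (b) either ord_p(t) > (1/2)·Σ_{j=0}^{a−1} k_j and (1/2)·Σ_{j=0}^{a−1} k_j = Σ_{j∈J} k_j for some subset J ⊆ {0, …, a−1}, or ord_p(t) ≤ (1/2)·Σ_{j=0}^{a−1} k_j and ord_p(t) = Σ_{j∈J} k_j for some subset J ⊆ {0, …, a−1}. (Here Σ_{j∈∅} k_j = 0.) -/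
/-!
STATEMENT 18: Let a ≥ 1 and let k_0, …, k_{a−1} be nonnegative integers.  For each j
let A_j ∈ GL_2(O_E) and Δ_j := diag(p^{k_j}, 1), and set
P := (A_0·Δ_0)·(A_1·Δ_1)·⋯·(A_{a−1}·Δ_{a−1}), t := tr(P).  Then the following are
equivalent: (a) P has an eigenvalue λ in an algebraic closure of E with
ord_p(λ) = Σ_{j∈J} k_j for some subset J ⊆ {0, …, a−1}; (b) either
ord_p(t) > (1/2)·Σ_j k_j and (1/2)·Σ_j k_j = Σ_{j∈J} k_j for some J, or
ord_p(t) ≤ (1/2)·Σ_j k_j and ord_p(t) = Σ_{j∈J} k_j for some J.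

Context: E a finite extension of Q_p with p-adic valuation ord (normalized by
ord(p) = 1) and ring of integers O_E = {x : 0 ≤ ord x}; ordbar denotes the unique
extension of ord to the algebraic closure of E (given here as data satisfying the
valuation axioms and extending ord).
-/

open Polynomial Matrix

section helpers
variable {F : Type*} [Field F] {v : F → WithTop ℝ}

theorem vone (hv0 : ∀ x : F, v x = ⊤ ↔ x = 0)
    (hvmul : ∀ x y : F, v (x * y) = v x + v y) : v 1 = 0 := by
  have h := hvmul 1 1
  rw [mul_one] at h
  have h1 : v 1 ≠ ⊤ := fun h' => one_ne_zero ((hv0 1).mp h')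
  have h2 : v 1 + 0 = v 1 + v 1 := by rw [add_zero]; exact h
  exact (WithTop.add_left_cancel h1 h2).symm

theorem vneg (hv0 : ∀ x : F, v x = ⊤ ↔ x = 0)
    (hvmul : ∀ x y : F, v (x * y) = v x + v y) (x : F) : v (-x) = v x := by
  have hm1 : v (-1 : F) = 0 := by
    have h := hvmul (-1) (-1)
    rw [neg_one_mul, neg_neg, vone hv0 hvmul] at h
    have h1 : v (-1 : F) ≠ ⊤ := fun h' => by
      have := (hv0 _).mp h'; norm_num at this
    lift v (-1 : F) to ℝ using h1 with r hr
    have : (0 : ℝ) = r + r := by exact_mod_cast h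
    have : r = 0 := by linarith
    simp [this]
  have := hvmul (-1) x
  rw [neg_one_mul, hm1, zero_add] at this
  exact this

theorem vmin_lt (hv0 : ∀ x : F, v x = ⊤ ↔ x = 0)
    (hvmul : ∀ x y : F, v (x * y) = v x + v y)
    (hvadd : ∀ x y : F, min (v x) (v y) ≤ v (x + y))
    {x y : F} (h : v x < v y) : v (x + y) = v x := by
  refine le_antisymm ?_ (by simpa [min_eq_left h.le] using hvadd x y)
  by_contra hc
  push_neg at hc
  have h2 := hvadd (x + y) (-y)
  rw [add_neg_cancel_right, vneg hv0 hvmul] at h2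
  have : v x < min (v (x + y)) (v y) := lt_min hc h
  exact absurd h2 (not_le.mpr this)

theorem vmin (hv0 : ∀ x : F, v x = ⊤ ↔ x = 0)
    (hvmul : ∀ x y : F, v (x * y) = v x + v y)
    (hvadd : ∀ x y : F, min (v x) (v y) ≤ v (x + y))
    {x y : F} (h : v x ≠ v y) : v (x + y) = min (v x) (v y) := by
  rcases lt_or_gt_of_ne h with hlt | hlt
  · rw [vmin_lt hv0 hvmul hvadd hlt, min_eq_left hlt.le]
  · rw [add_comm, vmin_lt hv0 hvmul hvadd hlt, min_eq_right hlt.le]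

theorem vprod (hv0 : ∀ x : F, v x = ⊤ ↔ x = 0)
    (hvmul : ∀ x y : F, v (x * y) = v x + v y)
    {ι : Type*} (s : Finset ι) (f : ι → F) :
    v (∏ j ∈ s, f j) = ∑ j ∈ s, v (f j) := by
  classical
  induction s using Finset.induction_on with
  | empty => simpa using vone hv0 hvmul
  | insert a s hne ih =>
                     rw [Finset.prod_insert hne, Finset.sum_insert hne, hvmul, ih]

theorem vquad (hv0 : ∀ x : F, v x = ⊤ ↔ x = 0)
    (hvmul : ∀ x y : F, v (x * y) = v x + v y)
    (hvadd : ∀ x y : F, min (v x) (v y) ≤ v (x + y))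
    (lam mu t d : F) (hs : lam + mu = t) (hm : lam * mu = d)
    (K : ℝ) (hd : v d = (K : WithTop ℝ)) :
    ∃ x y : ℝ, v lam = (x : WithTop ℝ) ∧ v mu = (y : WithTop ℝ) ∧ x + y = K ∧
      (x = y → ((K / 2 : ℝ) : WithTop ℝ) ≤ v t) ∧
      (x ≠ y → v t = ((min x y : ℝ) : WithTop ℝ)) := by
  have h := hvmul lam mu
  rw [hm, hd] at h
  have hl : v lam ≠ ⊤ := fun h' => by rw [h'] at h; simp [WithTop.top_add] at h
  have hmu : v mu ≠ ⊤ := fun h' => by rw [h'] at h; simp [WithTop.add_top] at h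
  lift v lam to ℝ using hl with x hx
  lift v mu to ℝ using hmu with y hy
  refine ⟨x, y, rfl, rfl, by exact_mod_cast h.symm, ?_, ?_⟩
  · intro hxy
    have hK : x = K / 2 := by
      have : x + y = K := by exact_mod_cast h.symm
      rw [← hxy] at this; linarith
    have := hvadd lam mu
    rw [hs, ← hx, ← hy, ← hxy, min_self, hK] at this
    exact this
  · intro hxy
    have hne : v lam ≠ v mu := by rw [← hx, ← hy]; exact_mod_cast hxy
    rw [← hs, vmin hv0 hvmul hvadd hne, ← hx, ← hy]
    exact_mod_cast (WithTop.coe_min x y).symm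

end helpers

theorem my_charpoly_fin_two {R : Type*} [CommRing R] (M : Matrix (Fin 2) (Fin 2) R) :
    M.charpoly = X ^ 2 - C (Matrix.trace M) * X + C M.det := by
  have h01 : (0 : Fin 2) ≠ 1 := by decide
  have h10 : (1 : Fin 2) ≠ 0 := by decide
  rw [Matrix.charpoly, Matrix.det_fin_two, Matrix.charmatrix_apply_eq,
    Matrix.charmatrix_apply_eq, Matrix.charmatrix_apply_ne _ _ _ h01,
    Matrix.charmatrix_apply_ne _ _ _ h10, Matrix.trace_fin_two, Matrix.det_fin_two]
  simp only [C_add, C_sub, C_mul]; ring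

theorem stmt18
    (p : ℕ) [Fact (Nat.Prime p)]
    (E : Type*) [Field E] [Algebra ℚ_[p] E] [FiniteDimensional ℚ_[p] E]
    (ord : E → WithTop ℝ)
    (hord0 : ∀ x : E, ord x = ⊤ ↔ x = 0)
    (hordmul : ∀ x y : E, ord (x * y) = ord x + ord y)
    (hordadd : ∀ x y : E, min (ord x) (ord y) ≤ ord (x + y))
    (hordext : ∀ x : ℚ_[p], x ≠ 0 →
      ord (algebraMap ℚ_[p] E x) = ((x.valuation : ℝ) : WithTop ℝ))
    (OE : Subring E) (hOE : ∀ x : E, x ∈ OE ↔ 0 ≤ ord x)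
    -- the unique extension of ord to an algebraic closure of E
    (ordbar : AlgebraicClosure E → WithTop ℝ)
    (hordbar0 : ∀ x, ordbar x = ⊤ ↔ x = 0)
    (hordbarmul : ∀ x y, ordbar (x * y) = ordbar x + ordbar y)
    (hordbaradd : ∀ x y, min (ordbar x) (ordbar y) ≤ ordbar (x + y))
    (hordbarext : ∀ x : E, ordbar (algebraMap E (AlgebraicClosure E) x) = ord x)
    -- the data
    (a : ℕ) (ha : 1 ≤ a) (k : Fin a → ℕ)
    (A : Fin a → Matrix (Fin 2) (Fin 2) E)
    (hAint : ∀ j i i', A j i i' ∈ OE)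
    (hAinv : ∀ j, ∃ Ainv : Matrix (Fin 2) (Fin 2) E,
      (∀ i i', Ainv i i' ∈ OE) ∧ A j * Ainv = 1 ∧ Ainv * A j = 1) :
    -- (a) ⟺ (b), with P and t written out
    ((∃ (lam : AlgebraicClosure E) (J : Finset (Fin a)),
        Polynomial.aeval lam
          (Matrix.charpoly
            ((List.ofFn fun j : Fin a =>
              A j * Matrix.diagonal ![(p : E) ^ (k j), 1]).prod)) = 0 ∧
        ordbar lam = (((∑ j ∈ J, k j : ℕ) : ℝ) : WithTop ℝ))
      ↔
      ((((((∑ j, k j : ℕ) : ℝ) / 2 : ℝ) : WithTop ℝ) <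
          ord (Matrix.trace
            ((List.ofFn fun j : Fin a =>
              A j * Matrix.diagonal ![(p : E) ^ (k j), 1]).prod)) ∧
        ∃ J : Finset (Fin a),
          (((∑ j, k j : ℕ) : ℝ) / 2 : ℝ) = ((∑ j ∈ J, k j : ℕ) : ℝ))
      ∨
        (ord (Matrix.trace
            ((List.ofFn fun j : Fin a =>
              A j * Matrix.diagonal ![(p : E) ^ (k j), 1]).prod)) ≤
          ((((∑ j, k j : ℕ) : ℝ) / 2 : ℝ) : WithTop ℝ) ∧
        ∃ J : Finset (Fin a),
          ord (Matrix.trace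
            ((List.ofFn fun j : Fin a =>
              A j * Matrix.diagonal ![(p : E) ^ (k j), 1]).prod)) =
            (((∑ j ∈ J, k j : ℕ) : ℝ) : WithTop ℝ)))) := by
  classical
  set P : Matrix (Fin 2) (Fin 2) E :=
    (List.ofFn fun j : Fin a => A j * Matrix.diagonal ![(p : E) ^ (k j), 1]).prod with hPdef
  set K : ℕ := ∑ j, k j with hKdef
  -- valuation of p
  have hp_ne : (p : ℚ_[p]) ≠ 0 := Nat.cast_ne_zero.mpr (Fact.out : p.Prime).ne_zero
  have hpE : ord ((p : E)) = ((1 : ℝ) : WithTop ℝ) := by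
    have h1 := hordext (p : ℚ_[p]) hp_ne
    rw [map_natCast, Padic.valuation_p] at h1
    exact_mod_cast h1
  have hppow : ∀ n : ℕ, ord ((p : E) ^ n) = (((n : ℝ)) : WithTop ℝ) := by
    intro n
    induction n with
    | zero => simpa using vone hord0 hordmul
    | succ n ih =>
        rw [pow_succ, hordmul, ih, hpE, ← WithTop.coe_add]
        norm_num
  -- determinants of the A j are units
  have hdetA : ∀ j, ord ((A j).det) = 0 := by
    intro j
    obtain ⟨B, hB, hAB, _⟩ := hAinv j
    have h1 : (A j).det * B.det = 1 := by rw [← Matrix.det_mul, hAB, Matrix.det_one]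
    have h2 := hordmul (A j).det B.det
    rw [h1, vone hord0 hordmul] at h2
    have hA0 : 0 ≤ ord (A j).det := by
      refine (hOE _).mp ?_
      rw [Matrix.det_fin_two]
      exact sub_mem (mul_mem (hAint j 0 0) (hAint j 1 1)) (mul_mem (hAint j 0 1) (hAint j 1 0))
    have hB0 : 0 ≤ ord B.det := by
      refine (hOE _).mp ?_
      rw [Matrix.det_fin_two]
      exact sub_mem (mul_mem (hB 0 0) (hB 1 1)) (mul_mem (hB 0 1) (hB 1 0))
    have h5 : ord (A j).det ≤ 0 := by
      calc ord (A j).det ≤ ord (A j).det + ord B.det := le_add_of_nonneg_right hB0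
        _ = 0 := h2.symm
    exact le_antisymm h5 hA0
  -- valuation of det P
  have hdet2 : P.det = ∏ j, ((A j).det * (p : E) ^ (k j)) := by
    rw [hPdef, ← Matrix.coe_detMonoidHom, map_list_prod, List.map_ofFn, List.prod_ofFn]
    congr 1; funext j
    simp [Matrix.det_mul, Matrix.det_diagonal, Fin.prod_univ_two]
  have hdetP : ord P.det = (((K : ℝ)) : WithTop ℝ) := by
    rw [hdet2, vprod hord0 hordmul]
    have h3 : ∀ j ∈ Finset.univ, ord ((A j).det * (p : E) ^ (k j))
        = ((((k j : ℕ) : ℝ)) : WithTop ℝ) := by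
      intro j _
      rw [hordmul, hdetA j, hppow, zero_add]
    rw [Finset.sum_congr rfl h3, ← WithTop.coe_sum]
    norm_cast
  -- the quadratic
  set t : E := Matrix.trace P with htdef
  set tbar : AlgebraicClosure E := algebraMap E (AlgebraicClosure E) t with htbar
  set dbar : AlgebraicClosure E := algebraMap E (AlgebraicClosure E) P.det with hdbar
  have hcp : ∀ lam : AlgebraicClosure E,
      Polynomial.aeval lam P.charpoly = lam ^ 2 - tbar * lam + dbar := by
    intro lam
    rw [my_charpoly_fin_two]
    simp [htbar, hdbar, htdef]
  have hdbarval : ordbar dbar = (((K : ℝ)) : WithTop ℝ) := by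
    rw [hdbar, hordbarext, hdetP]
  have htbarval : ordbar tbar = ord t := hordbarext t
  have key : ∀ lam : AlgebraicClosure E, Polynomial.aeval lam P.charpoly = 0 →
      ∃ x y : ℝ, ordbar lam = (x : WithTop ℝ) ∧ ordbar (tbar - lam) = (y : WithTop ℝ) ∧
        x + y = (K : ℝ) ∧
        (x = y → ((((K : ℝ) / 2 : ℝ)) : WithTop ℝ) ≤ ord t) ∧
        (x ≠ y → ord t = ((min x y : ℝ) : WithTop ℝ)) ∧
        Polynomial.aeval (tbar - lam) P.charpoly = 0 := by
    intro lam hlam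
    rw [hcp] at hlam
    have hs : lam + (tbar - lam) = tbar := by ring
    have hm : lam * (tbar - lam) = dbar := by linear_combination -hlam
    obtain ⟨x, y, hx, hy, hxy, h1, h2⟩ :=
      vquad hordbar0 hordbarmul hordbaradd _ _ _ _ hs hm (K : ℝ) hdbarval
    refine ⟨x, y, hx, hy, hxy, ?_, ?_, ?_⟩
    · intro h; have := h1 h; rwa [htbarval] at this
    · intro h; have := h2 h; rwa [htbarval] at this
    · rw [hcp]; linear_combination hlam
  constructor
  · -- (a) → (b)
    rintro ⟨lam, J, hroot, hval⟩
    obtain ⟨x, y, hx, hy, hxy, heq, hne, -⟩ := key lam hroot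
    have hxm : x = ((∑ j ∈ J, k j : ℕ) : ℝ) := by
      rw [hx] at hval; exact_mod_cast hval
    by_cases hcase : x = y
    · have hx2 : x = (K : ℝ) / 2 := by rw [← hcase] at hxy; linarith
      by_cases ht : ((((K : ℝ) / 2 : ℝ)) : WithTop ℝ) < ord t
      · exact Or.inl ⟨ht, ⟨J, by rw [← hx2, hxm]⟩⟩
      · push_neg at ht
        have h3 := heq hcase
        have h4 : ord t = ((((K : ℝ) / 2 : ℝ)) : WithTop ℝ) := le_antisymm ht h3
        refine Or.inr ⟨ht, ⟨J, ?_⟩⟩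
        rw [h4, ← hxm, hx2]
    · have hmin := hne hcase
      have hminle : min x y ≤ (K : ℝ) / 2 := by
        rcases le_total x y with h | h
        · rw [min_eq_left h]; linarith
        · rw [min_eq_right h]; linarith
      refine Or.inr ⟨by rw [hmin]; exact_mod_cast hminle, ?_⟩
      rcases le_total x y with hle | hle
      · exact ⟨J, by rw [hmin, min_eq_left hle, hxm]⟩
      · refine ⟨Jᶜ, ?_⟩
        have hsum : (∑ j ∈ J, k j) + ∑ j ∈ Jᶜ, k j = K := by
          rw [hKdef, Finset.sum_add_sum_compl]
        have hy2 : y = ((∑ j ∈ Jᶜ, k j : ℕ) : ℝ) := by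
          have h5 : ((∑ j ∈ J, k j : ℕ) : ℝ) + y = (K : ℝ) := by rw [← hxm]; exact hxy
          have h6 : ((∑ j ∈ J, k j : ℕ) : ℝ) + ((∑ j ∈ Jᶜ, k j : ℕ) : ℝ) = (K : ℝ) := by
            exact_mod_cast congrArg (fun n : ℕ => (n : ℝ)) hsum
          linarith
        rw [hmin, min_eq_right hle, hy2]
  · -- (b) → (a)
    intro hb
    obtain ⟨lam, hlam⟩ := IsAlgClosed.exists_aeval_eq_zero (AlgebraicClosure E) P.charpoly
      (by rw [Matrix.charpoly_degree_eq_dim]; simp)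
    obtain ⟨x, y, hx, hy, hxy, heq, hne, hroot2⟩ := key lam hlam
    rcases hb with ⟨hgt, J, hJ⟩ | ⟨hle, J, hJ⟩
    · have hxy' : x = y := by
        by_contra hc
        have hmin := hne hc
        have h5 : min x y < (K : ℝ) / 2 := by
          rcases lt_or_gt_of_ne hc with h | h
          · rw [min_eq_left h.le]; linarith
          · rw [min_eq_right h.le]; linarith
        rw [hmin] at hgt
        have := WithTop.coe_lt_coe.mp hgt
        linarith
      have hx2 : x = (K : ℝ) / 2 := by rw [← hxy'] at hxy; linarith
      exact ⟨lam, J, hlam, by rw [hx, hx2, hJ]⟩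
    · by_cases hc : x = y
      · have h3 := heq hc
        have h4 : ord t = ((((K : ℝ) / 2 : ℝ)) : WithTop ℝ) := le_antisymm hle h3
        have hx2 : x = (K : ℝ) / 2 := by rw [← hc] at hxy; linarith
        have h5 : ((K : ℝ) / 2 : ℝ) = ((∑ j ∈ J, k j : ℕ) : ℝ) := by
          exact_mod_cast h4.symm.trans hJ
        refine ⟨lam, J, hlam, ?_⟩
        rw [hx, hx2, h5]
      · have hmin := hne hc
        rcases le_total x y with h | h
        · rw [min_eq_left h] at hmin
          exact ⟨lam, J, hlam, hx.trans (hmin.symm.trans hJ)⟩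
        · rw [min_eq_right h] at hmin
          exact ⟨tbar - lam, J, hroot2, hy.trans (hmin.symm.trans hJ)⟩
end

section
/- Let a ≥ 1, and for each j ∈ Z/aZ let k_j > 0 be an integer, Δ_j := diag(p^{k_j}, 1), and v_j, v'_j ∈ O_E. Set A_j := [[0, −1],[1, v_j]] and A'_j := [[0, −1],[1, v'_j]] in GL_2(O_E). Let 𝒫 denote the group of upper-triangular 2×2 matrices over O_E whose diagonal entries are units of O_E, and for C ∈ 𝒫 put C^♭ := Δ_j·C·Δ_j^{−1}, which again lies in 𝒫. Then there exist matrices C_j ∈ 𝒫 (j ∈ Z/aZ) with A'_j = C_{j−1}^{−1}·A_j·(Δ_j·C_j·Δ_j^{−1}) for all j ∈ Z/aZ if and only if: when a is odd, v_j = v'_j for all j; and when a is even, there exists a unit w ∈ O_E^× such that v_j = w^{(−1)^j}·v'_j for all j. -/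
/-!
STATEMENT 19: Let a ≥ 1 and for each j ∈ Z/aZ let k_j > 0, Δ_j := diag(p^{k_j}, 1),
and v_j, v'_j ∈ O_E.  Set A_j := [[0, −1],[1, v_j]] and A'_j := [[0, −1],[1, v'_j]].
Let 𝒫 be the group of upper-triangular 2×2 matrices over O_E with unit diagonal
entries.  Then there exist C_j ∈ 𝒫 with A'_j = C_{j−1}^{−1}·A_j·(Δ_j·C_j·Δ_j^{−1})
for all j iff: when a is odd, v_j = v'_j for all j; and when a is even, there is a
unit w ∈ O_E^× with v_j = w^{(−1)^j}·v'_j for all j.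

Context: E a finite extension of Q_p with p-adic valuation ord (normalized by
ord(p) = 1) and ring of integers O_E = {x : 0 ≤ ord x}; matrices are taken over E,
with integrality conditions stating membership in O_E.
-/

private lemma parmod19 {a : ℕ} (ha : Even a) (m : ℕ) : Even (m % a) ↔ Even m := by
  rcases eq_or_ne a 0 with rfl | h0
  · simp
  conv_rhs => rw [← Nat.div_add_mod m a]
  rw [Nat.even_add]
  simp [ha.mul_right]

theorem stmt19
    (p : ℕ) [Fact (Nat.Prime p)]
    (E : Type*) [Field E] [Algebra ℚ_[p] E] [FiniteDimensional ℚ_[p] E]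
    (ord : E → WithTop ℝ)
    (hord0 : ∀ x : E, ord x = ⊤ ↔ x = 0)
    (hordmul : ∀ x y : E, ord (x * y) = ord x + ord y)
    (hordadd : ∀ x y : E, min (ord x) (ord y) ≤ ord (x + y))
    (hordext : ∀ x : ℚ_[p], x ≠ 0 →
      ord (algebraMap ℚ_[p] E x) = ((x.valuation : ℝ) : WithTop ℝ))
    (OE : Subring E) (hOE : ∀ x : E, x ∈ OE ↔ 0 ≤ ord x)
    (a : ℕ) [NeZero a]
    (k : ZMod a → ℕ) (hk : ∀ j, 0 < k j)
    (v v' : ZMod a → E) (hv : ∀ j, v j ∈ OE) (hv' : ∀ j, v' j ∈ OE) :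
    -- existence of (C_j) in the parabolic group conjugating (A_j) to (A'_j) …
    (∃ C : ZMod a → Matrix (Fin 2) (Fin 2) E,
      (∀ j, (∀ i i', C j i i' ∈ OE) ∧ C j 1 0 = 0 ∧
        (∃ u ∈ OE, C j 0 0 * u = 1) ∧ (∃ u ∈ OE, C j 1 1 * u = 1)) ∧
      (∀ j : ZMod a,
        !![0, -1; 1, v' j] =
          (C (j - 1))⁻¹ * !![0, -1; 1, v j] *
            (Matrix.diagonal ![(p : E) ^ (k j), 1] * C j *
              (Matrix.diagonal ![(p : E) ^ (k j), 1])⁻¹)))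
    ↔
    -- … iff v ∼_k v'
    ((Odd a → ∀ j, v j = v' j) ∧
     (Even a → ∃ w : E, w ≠ 0 ∧ w ∈ OE ∧ w⁻¹ ∈ OE ∧
        ∀ j : ZMod a, v j = (if Even (ZMod.val j) then w else w⁻¹) * v' j)) := by
  classical
  have hchar : CharZero E := charZero_of_injective_algebraMap (algebraMap ℚ_[p] E).injective
  have hpne : (p : E) ≠ 0 := Nat.cast_ne_zero.mpr (Fact.out : Nat.Prime p).ne_zero
  have hpk : ∀ j : ZMod a, ((p : E) ^ (k j)) ≠ 0 := fun j => pow_ne_zero _ hpne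
  have hdetD : ∀ j : ZMod a, IsUnit (Matrix.diagonal ![(p : E) ^ (k j), 1]).det := by
    intro j
    rw [Matrix.det_diagonal]
    simp [Fin.prod_univ_two, isUnit_iff_ne_zero, hpk j]
  constructor
  · rintro ⟨C, hC, heq⟩
    have hC10 : ∀ j, C j 1 0 = 0 := fun j => (hC j).2.1
    have hCne0 : ∀ j, C j 0 0 ≠ 0 := by
      intro j
      obtain ⟨u, _, hu⟩ := (hC j).2.2.1
      exact left_ne_zero_of_mul_eq_one hu
    have hCne1 : ∀ j, C j 1 1 ≠ 0 := by
      intro j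
      obtain ⟨u, _, hu⟩ := (hC j).2.2.2
      exact left_ne_zero_of_mul_eq_one hu
    have hdetC : ∀ j, IsUnit (C j).det := by
      intro j
      rw [Matrix.det_fin_two, hC10 j]
      simpa [isUnit_iff_ne_zero] using mul_ne_zero (hCne0 j) (hCne1 j)
    have h1 : ∀ j : ZMod a,
        C (j - 1) * (!![0, -1; 1, v' j] * Matrix.diagonal ![(p : E) ^ (k j), 1]) =
          !![0, -1; 1, v j] * (Matrix.diagonal ![(p : E) ^ (k j), 1] * C j) := by
      intro j
      have h := congrArg (fun X => C (j - 1) * X * Matrix.diagonal ![(p : E) ^ (k j), 1]) (heq j)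
      simp only [Matrix.mul_assoc] at h
      rwa [Matrix.nonsing_inv_mul _ (hdetD j), Matrix.mul_one,
        ← Matrix.mul_assoc (C (j - 1)) (C (j - 1))⁻¹,
        Matrix.mul_nonsing_inv _ (hdetC (j - 1)), Matrix.one_mul] at h
    have ent : ∀ (j : ZMod a) (i i' : Fin 2),
        (C (j - 1) * (!![0, -1; 1, v' j] * Matrix.diagonal ![(p : E) ^ (k j), 1])) i i' =
          (!![0, -1; 1, v j] * (Matrix.diagonal ![(p : E) ^ (k j), 1] * C j)) i i' :=
      fun j i i' => by rw [h1 j]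
    -- upper-right entries vanish
    have simpset : True := trivial
    have hb : ∀ j : ZMod a, C j 0 1 = 0 := by
      intro j
      have e := ent (j + 1) 0 0
      simp only [Matrix.mul_apply, Fin.sum_univ_two, Matrix.mul_diagonal, Matrix.diagonal_mul,
        Matrix.cons_val_zero, Matrix.cons_val_one, Matrix.head_cons, Matrix.of_apply,
        Matrix.cons_val', Matrix.empty_val', Matrix.cons_val_fin_one, Matrix.head_fin_const,
        Matrix.diagonal_apply, Fin.reduceEq, reduceIte, if_true, if_false,
        add_sub_cancel_right, hC10, zero_mul, mul_zero, one_mul, mul_one, add_zero, zero_add,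
        neg_mul, mul_neg, neg_neg, neg_zero] at e
      exact (mul_eq_zero.mp e).resolve_right (hpk _)
    have hcd : ∀ j : ZMod a, C (j - 1) 1 1 = C j 0 0 := by
      intro j
      have e := ent j 1 0
      simp only [Matrix.mul_apply, Fin.sum_univ_two, Matrix.mul_diagonal, Matrix.diagonal_mul,
        Matrix.cons_val_zero, Matrix.cons_val_one, Matrix.head_cons, Matrix.of_apply,
        Matrix.cons_val', Matrix.empty_val', Matrix.cons_val_fin_one, Matrix.head_fin_const,
        Matrix.diagonal_apply, Fin.reduceEq, reduceIte, if_true, if_false,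
        hC10, zero_mul, mul_zero, one_mul, mul_one, add_zero, zero_add,
        neg_mul, mul_neg, neg_neg, neg_zero] at e
      apply mul_right_cancel₀ (hpk j)
      linear_combination e
    have hdc : ∀ j : ZMod a, C (j - 1) 0 0 = C j 1 1 := by
      intro j
      have e := ent j 0 1
      simp only [Matrix.mul_apply, Fin.sum_univ_two, Matrix.mul_diagonal, Matrix.diagonal_mul,
        Matrix.cons_val_zero, Matrix.cons_val_one, Matrix.head_cons, Matrix.of_apply,
        Matrix.cons_val', Matrix.empty_val', Matrix.cons_val_fin_one, Matrix.head_fin_const,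
        Matrix.diagonal_apply, Fin.reduceEq, reduceIte, if_true, if_false,
        hC10, hb, zero_mul, mul_zero, one_mul, mul_one, add_zero, zero_add,
        neg_mul, mul_neg, neg_neg, neg_zero] at e
      linear_combination -e
    have hvv : ∀ j : ZMod a, C j 0 0 * v' j = v j * C j 1 1 := by
      intro j
      have e := ent j 1 1
      simp only [Matrix.mul_apply, Fin.sum_univ_two, Matrix.mul_diagonal, Matrix.diagonal_mul,
        Matrix.cons_val_zero, Matrix.cons_val_one, Matrix.head_cons, Matrix.of_apply,
        Matrix.cons_val', Matrix.empty_val', Matrix.cons_val_fin_one, Matrix.head_fin_const,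
        Matrix.diagonal_apply, Fin.reduceEq, reduceIte, if_true, if_false,
        hC10, hb, zero_mul, mul_zero, one_mul, mul_one, add_zero, zero_add,
        neg_mul, mul_neg, neg_neg, neg_zero] at e
      rw [← hcd j]
      linear_combination e
    have pairL : ∀ n : ℕ,
        C (n : ZMod a) 0 0 = (if Even n then C 0 0 0 else C 0 1 1) ∧
        C (n : ZMod a) 1 1 = (if Even n then C 0 1 1 else C 0 0 0) := by
      intro n
      induction n with
      | zero => simp
      | succ n ih =>
        obtain ⟨ih1, ih2⟩ := ih
        have e1 := hcd ((n : ZMod a) + 1)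
        have e2 := hdc ((n : ZMod a) + 1)
        rw [add_sub_cancel_right] at e1 e2
        have hc : ((n + 1 : ℕ) : ZMod a) = (n : ZMod a) + 1 := by push_cast; ring
        rw [hc, ← e1, ← e2, ih1, ih2]
        by_cases he : Even n
        · rw [if_pos he, if_pos he, if_neg (by simp [Nat.even_add_one, he]),
            if_neg (by simp [Nat.even_add_one, he])]
          exact ⟨rfl, rfl⟩
        · rw [if_neg he, if_neg he, if_pos (Nat.even_add_one.mpr he),
            if_pos (Nat.even_add_one.mpr he)]
          exact ⟨rfl, rfl⟩
    constructor
    · intro haodd j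
      have t := pairL a
      rw [ZMod.natCast_self, if_neg (fun he => (Nat.not_odd_iff_even.mpr he) haodd)] at t
      have hcd0 : C 0 0 0 = C 0 1 1 := t.1
      have hall : C j 0 0 = C j 1 1 := by
        have t2 := pairL j.val
        rw [ZMod.natCast_rightInverse j] at t2
        by_cases hje : Even j.val
        · rw [if_pos hje, if_pos hje] at t2
          rw [t2.1, t2.2]; exact hcd0
        · rw [if_neg hje, if_neg hje] at t2
          rw [t2.1, t2.2]; exact hcd0.symm
      have := hvv j
      rw [hall] at this
      exact (mul_left_cancel₀ (hCne1 j) (this.trans (mul_comm _ _))).symm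
    · intro haeven
      refine ⟨C 0 0 0 * (C 0 1 1)⁻¹, mul_ne_zero (hCne0 0) (inv_ne_zero (hCne1 0)), ?_, ?_, ?_⟩
      · obtain ⟨u, huOE, hu⟩ := (hC 0).2.2.2
        rw [inv_eq_of_mul_eq_one_right hu]
        exact OE.mul_mem ((hC 0).1 0 0) huOE
      · rw [mul_inv_rev, inv_inv]
        obtain ⟨u, huOE, hu⟩ := (hC 0).2.2.1
        rw [inv_eq_of_mul_eq_one_right hu]
        exact OE.mul_mem ((hC 0).1 1 1) huOE
      · intro j
        have t := pairL j.val
        rw [ZMod.natCast_rightInverse j] at t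
        have e := hvv j
        by_cases hje : Even j.val
        · rw [if_pos hje, if_pos hje] at t
          rw [t.1, t.2] at e
          rw [if_pos hje]
          field_simp [hCne0 0, hCne1 0]
          linear_combination -e
        · rw [if_neg hje, if_neg hje] at t
          rw [t.1, t.2] at e
          rw [if_neg hje, mul_inv_rev, inv_inv]
          field_simp [hCne0 0, hCne1 0]
          linear_combination -e
  · rintro ⟨hodd, heven⟩
    rcases Nat.even_or_odd a with ha | ha
    · -- a even
      obtain ⟨w, hw0, hwOE, hwiOE, hwv⟩ := heven ha
      have ha2 : 1 < a := by
        rcases ha with ⟨b, hb⟩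
        have := NeZero.ne a
        omega
      haveI : Fact (1 < a) := ⟨ha2⟩
      have hpar : ∀ j : ZMod a, Even ((j + 1).val) ↔ ¬ Even j.val := by
        intro j
        rw [ZMod.val_add, ZMod.val_one, parmod19 ha, Nat.even_add_one]
      have hpar' : ∀ j : ZMod a, Even ((j - 1).val) ↔ ¬ Even j.val := by
        intro j
        have := hpar (j - 1)
        rw [sub_add_cancel] at this
        tauto
      refine ⟨fun j => if Even j.val then Matrix.diagonal ![w, 1]
        else Matrix.diagonal ![1, w], ?_, ?_⟩
      · intro j
        by_cases hje : Even j.val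
        · simp only [if_pos hje]
          refine ⟨?_, Matrix.diagonal_apply_ne _ (by decide), ⟨w⁻¹, hwiOE, by
            simp [Matrix.diagonal_apply_eq, mul_inv_cancel₀ hw0]⟩, ⟨1, OE.one_mem, by
            simp [Matrix.diagonal_apply_eq]⟩⟩
          intro i i'
          rcases eq_or_ne i i' with rfl | hne
          · rw [Matrix.diagonal_apply_eq]
            fin_cases i <;> simp [hwOE, OE.one_mem]
          · rw [Matrix.diagonal_apply_ne _ hne]; exact OE.zero_mem
        · simp only [if_neg hje]
          refine ⟨?_, Matrix.diagonal_apply_ne _ (by decide), ⟨1, OE.one_mem, by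
            simp [Matrix.diagonal_apply_eq]⟩,
            ⟨w⁻¹, hwiOE, by simp [Matrix.diagonal_apply_eq, mul_inv_cancel₀ hw0]⟩⟩
          intro i i'
          rcases eq_or_ne i i' with rfl | hne
          · rw [Matrix.diagonal_apply_eq]
            fin_cases i <;> simp [hwOE, OE.one_mem]
          · rw [Matrix.diagonal_apply_ne _ hne]; exact OE.zero_mem
      · intro j
        have key : ∀ d : Fin 2 → E, Matrix.diagonal ![(p : E) ^ (k j), 1] * Matrix.diagonal d *
            (Matrix.diagonal ![(p : E) ^ (k j), 1])⁻¹ = Matrix.diagonal d := by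
          intro d
          have hcomm : Matrix.diagonal ![(p : E) ^ (k j), 1] * Matrix.diagonal d
              = Matrix.diagonal d * Matrix.diagonal ![(p : E) ^ (k j), 1] := by
            have hfun2 : (fun i => ![(p : E) ^ (k j), 1] i * d i)
                = fun i => d i * ![(p : E) ^ (k j), 1] i := by
              funext i
              apply mul_comm
            rw [Matrix.diagonal_mul_diagonal, Matrix.diagonal_mul_diagonal, hfun2]
          rw [hcomm, Matrix.mul_assoc, Matrix.mul_nonsing_inv _ (hdetD j), Matrix.mul_one]
        by_cases hje : Even j.val
        · have hj1 : ¬ Even ((j - 1).val) := by rw [hpar' j]; tauto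
          simp only [if_pos hje, if_neg hj1]
          rw [key]
          have hwinv : (Matrix.diagonal ![(1:E), w])⁻¹ = Matrix.diagonal ![1, w⁻¹] := by
            apply Matrix.inv_eq_right_inv
            rw [Matrix.diagonal_mul_diagonal]
            have hfun : (fun i => ![(1:E), w] i * ![1, w⁻¹] i) = fun _ => (1:E) := by
              funext i
              fin_cases i <;> simp [mul_inv_cancel₀ hw0]
            rw [hfun]
            exact Matrix.diagonal_one
          rw [hwinv]
          have hvj : v j = w * v' j := by simpa [hje] using hwv j
          ext i i'
          fin_cases i <;> fin_cases i' <;>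
            simp [Matrix.mul_apply, Fin.sum_univ_two, hvj, Matrix.diagonal_mul,
              Matrix.mul_diagonal] <;> field_simp
        · have hj1 : Even ((j - 1).val) := by rw [hpar' j]; tauto
          simp only [if_neg hje, if_pos hj1]
          rw [key]
          have hwinv : (Matrix.diagonal ![w, (1:E)])⁻¹ = Matrix.diagonal ![w⁻¹, 1] := by
            apply Matrix.inv_eq_right_inv
            rw [Matrix.diagonal_mul_diagonal]
            have hfun : (fun i => ![w, (1:E)] i * ![w⁻¹, 1] i) = fun _ => (1:E) := by
              funext i
              fin_cases i <;> simp [mul_inv_cancel₀ hw0]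
            rw [hfun]
            exact Matrix.diagonal_one
          rw [hwinv]
          have hvj : v j = w⁻¹ * v' j := by simpa [hje] using hwv j
          ext i i'
          fin_cases i <;> fin_cases i' <;>
            simp [Matrix.mul_apply, Fin.sum_univ_two, hvj, Matrix.diagonal_mul,
              Matrix.mul_diagonal] <;> field_simp
    · -- a odd
      have hvv := hodd ha
      refine ⟨fun _ => 1, ?_, ?_⟩
      · intro j
        refine ⟨fun i i' => ?_, Matrix.one_apply_ne (by decide),
          ⟨1, OE.one_mem, by simp⟩, ⟨1, OE.one_mem, by simp⟩⟩
        show (1 : Matrix (Fin 2) (Fin 2) E) i i' ∈ OE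
        rcases eq_or_ne i i' with rfl | hne
        · rw [Matrix.one_apply_eq]; exact OE.one_mem
        · rw [Matrix.one_apply_ne hne]; exact OE.zero_mem
      · intro j
        show !![0, -1; 1, v' j] = (1 : Matrix (Fin 2) (Fin 2) E)⁻¹ * !![0, -1; 1, v j] *
          (Matrix.diagonal ![(p : E) ^ (k j), 1] * 1 * (Matrix.diagonal ![(p : E) ^ (k j), 1])⁻¹)
        rw [inv_one, Matrix.one_mul, Matrix.mul_one,
          Matrix.mul_nonsing_inv _ (hdetD j), Matrix.mul_one, hvv j]
end
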